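/- arXiv:1209.2849 — 7 statements merged into one kernel-verified Lean document; each statement's English description precedes it below -/
import Mathlib

section
/- The operator G : X → Y is Fréchet differentiable at every point φ ∈ X, and its Fréchet derivative DG(φ) ∈ L(X,Y) is given by (DG(φ)ψ)(r) = ∫_{Ω̄} J(r,r′)·S′(φ(−τ(r,r′))(r′))·ψ(−τ(r,r′))(r′) dr′ for all ψ ∈ X and all r ∈ Ω̄. -/
open MeasureTheory Set

/-- Lebesgue measure on a subset `Ω` of `ℝⁿ`, viewed as a measure on the subtype. -/
noncomputable def lebOn {n : ℕ} (Ω : Set (EuclideanSpace ℝ (Fin n))) :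
    MeasureTheory.Measure Ω :=
  MeasureTheory.Measure.comap Subtype.val MeasureTheory.volume

set_option maxHeartbeats 2000000 in
/-- The operator `G : X → Y` is Fréchet differentiable at every `φ ∈ X`,
with derivative `DG(φ) ∈ L(X,Y)` given by
`(DG(φ)ψ)(r) = ∫_{Ω̄} J(r,r')·S′(φ(−τ(r,r'))(r'))·ψ(−τ(r,r'))(r') dr'`. -/
theorem stmt2
    {n : ℕ} {Ω : Set (EuclideanSpace ℝ (Fin n))} [CompactSpace Ω]
    (hΩmeas : MeasurableSet Ω) (hΩpos : 0 < volume Ω) (hΩfin : volume Ω < ⊤)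
    {h : ℝ} (hh : 0 < h)
    (J : Ω → Ω → ℝ) (hJ : Continuous fun p : Ω × Ω => J p.1 p.2)
    (S : ℝ → ℝ) (hS : ContDiff ℝ (⊤ : ℕ∞) S)
    (hSbd : ∀ k : ℕ, ∃ C : ℝ, ∀ u : ℝ, |iteratedDeriv k S u| ≤ C)
    (τ : Ω → Ω → ℝ) (hτc : Continuous fun p : Ω × Ω => τ p.1 p.2)
    (hτ : ∀ r r' : Ω, τ r r' ∈ Icc 0 h)
    (G : C(Icc (-h) (0 : ℝ), C(Ω, ℝ)) → C(Ω, ℝ))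
    (hG : ∀ (φ : C(Icc (-h) (0 : ℝ), C(Ω, ℝ))) (r : Ω),
      G φ r = ∫ r' : Ω, J r r' * S (φ (projIcc (-h) 0 (by linarith) (-(τ r r'))) r')
        ∂(lebOn Ω)) :
    ∀ φ : C(Icc (-h) (0 : ℝ), C(Ω, ℝ)),
      ∃ D : C(Icc (-h) (0 : ℝ), C(Ω, ℝ)) →L[ℝ] C(Ω, ℝ),
        HasFDerivAt (𝕜 := ℝ) G D φ ∧
        ∀ (ψ : C(Icc (-h) (0 : ℝ), C(Ω, ℝ))) (r : Ω),
          D ψ r = ∫ r' : Ω,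
            J r r' * deriv S (φ (projIcc (-h) 0 (by linarith) (-(τ r r'))) r')
              * ψ (projIcc (-h) 0 (by linarith) (-(τ r r'))) r' ∂(lebOn Ω) := by
  intro φ
  have hh0 : -h ≤ (0:ℝ) := by linarith
  classical
  -- measure facts
  have hemb : MeasurableEmbedding ((↑) : Ω → EuclideanSpace ℝ (Fin n)) :=
    MeasurableEmbedding.subtype_coe hΩmeas
  haveI : IsFiniteMeasure (lebOn Ω) := by
    constructor
    rw [lebOn, hemb.comap_apply]
    simpa using hΩfin
  have hint : ∀ f : Ω → ℝ, Continuous f → Integrable f (lebOn Ω) := fun f hf =>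
    hf.integrable_of_hasCompactSupport (HasCompactSupport.of_compactSpace f)
  set m : ℝ := ((lebOn Ω) univ).toReal with hm
  have hm0 : 0 ≤ m := ENNReal.toReal_nonneg
  -- the delayed time map
  set σ : Ω × Ω → Icc (-h) (0:ℝ) := fun p => projIcc (-h) 0 hh0 (-(τ p.1 p.2)) with hσdef
  have hσc : Continuous σ := continuous_projIcc.comp hτc.neg
  -- evaluation facts
  have hev : ∀ χ : C(Icc (-h) (0:ℝ), C(Ω,ℝ)),
      Continuous fun p : Ω × Ω => χ (σ p) p.2 := by
    intro χ
    exact (continuous_eval (X := Ω) (Y := ℝ)).comp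
      ((χ.continuous.comp hσc).prodMk continuous_snd)
  have hevb : ∀ (χ : C(Icc (-h) (0:ℝ), C(Ω,ℝ))) (p : Ω × Ω), |χ (σ p) p.2| ≤ ‖χ‖ := by
    intro χ p
    calc |χ (σ p) p.2| ≤ ‖χ (σ p)‖ := by
          simpa [Real.norm_eq_abs] using (χ (σ p)).norm_coe_le_norm p.2
      _ ≤ ‖χ‖ := χ.norm_coe_le_norm (σ p)
  -- bound on J
  set Jc : C(Ω × Ω, ℝ) := ⟨fun p => J p.1 p.2, hJ⟩ with hJcdef
  set CJ : ℝ := ‖Jc‖ with hCJdef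
  have hCJ0 : 0 ≤ CJ := norm_nonneg _
  have hJb : ∀ p : Ω × Ω, |J p.1 p.2| ≤ CJ := fun p => by
    simpa [Real.norm_eq_abs, hJcdef] using Jc.norm_coe_le_norm p
  -- bounds on derivatives of S
  obtain ⟨C₁, hC₁⟩ := hSbd 1
  obtain ⟨C₂, hC₂⟩ := hSbd 2
  have hC1 : ∀ u, |deriv S u| ≤ C₁ := by
    intro u; simpa [iteratedDeriv_one] using hC₁ u
  have hC2 : ∀ u, |deriv (deriv S) u| ≤ C₂ := by
    intro u
    have h2 := hC₂ u
    rwa [show (2:ℕ) = 1 + 1 from rfl, iteratedDeriv_succ, iteratedDeriv_one] at h2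
  have hC10 : 0 ≤ C₁ := le_trans (abs_nonneg _) (hC1 0)
  have hC20 : 0 ≤ C₂ := le_trans (abs_nonneg _) (hC2 0)
  have hSd : Differentiable ℝ S := hS.differentiable (by simp)
  have hS1 : ContDiff ℝ (⊤:ℕ∞) (deriv S) := (contDiff_infty_iff_deriv.mp hS).2
  have hS1d : Differentiable ℝ (deriv S) := hS1.differentiable (by simp)
  have hS1c : Continuous (deriv S) := hS1d.continuous
  -- Lipschitz bound for deriv S
  have hlip : ∀ x y : ℝ, |deriv S x - deriv S y| ≤ C₂ * |x - y| := by
    intro x y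
    have := convex_univ.norm_image_sub_le_of_norm_deriv_le (f := deriv S)
      (fun u _ => hS1d u) (fun u _ => by simpa [Real.norm_eq_abs] using hC2 u)
      (mem_univ y) (mem_univ x)
    simpa [Real.norm_eq_abs] using this
  -- Taylor estimate
  have key : ∀ a b : ℝ, |S (a + b) - S a - deriv S a * b| ≤ C₂ * (|b| * |b|) := by
    intro a b
    set f : ℝ → ℝ := fun u => S u - deriv S a * u with hfdef
    have hfd : ∀ u, HasDerivAt f (deriv S u - deriv S a) u := by
      intro u
      have h1 : HasDerivAt (fun v : ℝ => deriv S a * v) (deriv S a) u := by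
        simpa using (hasDerivAt_id u).const_mul (deriv S a)
      exact ((hSd u).hasDerivAt).sub h1
    have seg : ∀ u ∈ segment ℝ a (a + b), ‖deriv S u - deriv S a‖ ≤ C₂ * |b| := by
      intro u hu
      rcases hu with ⟨s, t, hs, ht, hst, rfl⟩
      have hs1 : s = 1 - t := by linarith
      subst hs1
      have heq : (1 - t) • a + t • (a + b) - a = t * b := by
        simp only [smul_eq_mul]; ring
      have h1 := hlip ((1 - t) • a + t • (a + b)) a
      rw [heq] at h1
      have ht1 : t ≤ 1 := by linarith
      have h2 : |t * b| ≤ |b| := by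
        rw [abs_mul, abs_of_nonneg ht]
        nlinarith [abs_nonneg b]
      calc ‖deriv S ((1 - t) • a + t • (a + b)) - deriv S a‖
          ≤ C₂ * |t * b| := by simpa [Real.norm_eq_abs] using h1
        _ ≤ C₂ * |b| := by nlinarith
    have hmvt := (convex_segment a (a+b)).norm_image_sub_le_of_norm_deriv_le
      (fun u _ => (hfd u).differentiableAt)
      (fun u hu => by rw [(hfd u).deriv]; exact seg u hu)
      (left_mem_segment ℝ a (a+b)) (right_mem_segment ℝ a (a+b))
    have he : f (a + b) - f a = S (a + b) - S a - deriv S a * b := by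
      simp only [hfdef]; ring
    rw [he] at hmvt
    have hnb : ‖a + b - a‖ = |b| := by
      rw [Real.norm_eq_abs]; ring_nf
    rw [Real.norm_eq_abs, hnb] at hmvt
    calc |S (a + b) - S a - deriv S a * b| ≤ C₂ * |b| * |b| := hmvt
      _ = C₂ * (|b| * |b|) := by ring
  -- the derivative integrand
  have hFψ : ∀ χ : C(Icc (-h) (0:ℝ), C(Ω,ℝ)),
      Continuous fun p : Ω × Ω => J p.1 p.2 * deriv S (φ (σ p) p.2) * χ (σ p) p.2 :=
    fun χ => (hJ.mul (hS1c.comp (hev φ))).mul (hev χ)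
  have hFb : ∀ (χ : C(Icc (-h) (0:ℝ), C(Ω,ℝ))) (p : Ω × Ω),
      |J p.1 p.2 * deriv S (φ (σ p) p.2) * χ (σ p) p.2| ≤ CJ * C₁ * ‖χ‖ := by
    intro χ p
    rw [abs_mul, abs_mul]
    have h1 := hJb p
    have h2 := hC1 (φ (σ p) p.2)
    have h3 := hevb χ p
    have := mul_le_mul h1 h2 (abs_nonneg _) hCJ0
    apply mul_le_mul this h3 (abs_nonneg _)
    exact mul_nonneg hCJ0 hC10
  have hFint : ∀ (χ : C(Icc (-h) (0:ℝ), C(Ω,ℝ))) (r : Ω),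
      Integrable (fun r' => J r r' * deriv S (φ (σ (r,r')) r') * χ (σ (r,r')) r')
        (lebOn Ω) :=
    fun χ r => hint _ ((hFψ χ).comp (continuous_const.prodMk continuous_id))
  have hDcont : ∀ χ : C(Icc (-h) (0:ℝ), C(Ω,ℝ)), Continuous fun r : Ω =>
      ∫ r', J r r' * deriv S (φ (σ (r,r')) r') * χ (σ (r,r')) r' ∂(lebOn Ω) := by
    intro χ
    apply continuous_of_dominated (bound := fun _ => CJ * C₁ * ‖χ‖)
    · intro r
      exact (((hFψ χ).comp (continuous_const.prodMk continuous_id))).aestronglyMeasurable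
    · intro r
      filter_upwards with r'
      exact hFb χ (r, r')
    · exact integrable_const _
    · filter_upwards with r'
      exact (hFψ χ).comp (continuous_id.prodMk continuous_const)
  -- the linear map
  set Dfun : C(Icc (-h) (0:ℝ), C(Ω,ℝ)) → C(Ω,ℝ) := fun χ =>
    ⟨fun r => ∫ r', J r r' * deriv S (φ (σ (r,r')) r') * χ (σ (r,r')) r' ∂(lebOn Ω),
      hDcont χ⟩ with hDfundef
  have hDadd : ∀ χ₁ χ₂, Dfun (χ₁ + χ₂) = Dfun χ₁ + Dfun χ₂ := by
    intro χ₁ χ₂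
    ext r
    simp only [hDfundef, ContinuousMap.coe_mk, ContinuousMap.add_apply]
    rw [← integral_add (hFint χ₁ r) (hFint χ₂ r)]
    refine integral_congr_ae (Filter.Eventually.of_forall fun r' => ?_)
    show J r r' * deriv S (φ (σ (r,r')) r') * (χ₁ (σ (r,r')) r' + χ₂ (σ (r,r')) r') = _
    ring
  have hDsmul : ∀ (c : ℝ) (χ : C(Icc (-h) (0:ℝ), C(Ω,ℝ))), Dfun (c • χ) = c • Dfun χ := by
    intro c χ
    ext r
    simp only [hDfundef, ContinuousMap.coe_mk, ContinuousMap.smul_apply, smul_eq_mul]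
    rw [← integral_const_mul]
    refine integral_congr_ae (Filter.Eventually.of_forall fun r' => ?_)
    show J r r' * deriv S (φ (σ (r,r')) r') * (c * χ (σ (r,r')) r') = _
    ring
  set L : C(Icc (-h) (0:ℝ), C(Ω,ℝ)) →ₗ[ℝ] C(Ω,ℝ) :=
    { toFun := Dfun, map_add' := hDadd, map_smul' := hDsmul } with hLdef
  have hLb : ∀ χ, ‖L χ‖ ≤ (CJ * C₁ * m) * ‖χ‖ := by
    intro χ
    have hχ0 : (0:ℝ) ≤ ‖χ‖ := norm_nonneg χ
    refine (ContinuousMap.norm_le _ ?_).2 ?_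
    · exact mul_nonneg (mul_nonneg (mul_nonneg hCJ0 hC10) hm0) hχ0
    · intro r
      have hb := norm_integral_le_of_norm_le_const (μ := lebOn Ω)
        (f := fun r' => J r r' * deriv S (φ (σ (r,r')) r') * χ (σ (r,r')) r')
        (C := CJ * C₁ * ‖χ‖)
        (Filter.Eventually.of_forall fun r' => by
          rw [Real.norm_eq_abs]; exact hFb χ (r, r'))
      calc ‖L χ r‖ ≤ CJ * C₁ * ‖χ‖ * m := hb
        _ = CJ * C₁ * m * ‖χ‖ := by ring
  have hLc : Continuous L := AddMonoidHomClass.continuous_of_bound L (CJ * C₁ * m) hLb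
  set D : C(Icc (-h) (0:ℝ), C(Ω,ℝ)) →L[ℝ] C(Ω,ℝ) := ⟨L, hLc⟩ with hDdef
  have hDapp : ∀ (ψ : C(Icc (-h) (0:ℝ), C(Ω,ℝ))) (r : Ω),
      D ψ r = ∫ r', J r r' * deriv S (φ (σ (r,r')) r') * ψ (σ (r,r')) r' ∂(lebOn Ω) :=
    fun ψ r => rfl
  refine ⟨D, ?_, fun ψ r => hDapp ψ r⟩
  -- differentiability
  refine (hasFDerivAt_iff_isLittleO_nhds_zero (𝕜 := ℝ) (f := G) (f' := D) (x := φ)).mpr ?_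
  have hGc : ∀ χ : C(Icc (-h) (0:ℝ), C(Ω,ℝ)),
      Continuous fun p : Ω × Ω => J p.1 p.2 * S (χ (σ p) p.2) :=
    fun χ => hJ.mul (hS.continuous.comp (hev χ))
  have hGint : ∀ (χ : C(Icc (-h) (0:ℝ), C(Ω,ℝ))) (r : Ω),
      Integrable (fun r' => J r r' * S (χ (σ (r,r')) r')) (lebOn Ω) :=
    fun χ r => hint _ ((hGc χ).comp (continuous_const.prodMk continuous_id))
  have hbig : (fun ψ : C(Icc (-h) (0:ℝ), C(Ω,ℝ)) => G (φ + ψ) - G φ - D ψ)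
      =O[nhds 0] fun ψ => ‖ψ‖ ^ 2 := by
    apply Asymptotics.isBigO_of_le' (c := CJ * C₂ * m)
    intro ψ
    have hψ0 : (0:ℝ) ≤ ‖ψ‖ := norm_nonneg ψ
    have hrem : ∀ r : Ω, (G (φ + ψ) - G φ - D ψ) r =
        ∫ r', J r r' * (S (φ (σ (r,r')) r' + ψ (σ (r,r')) r')
          - S (φ (σ (r,r')) r') - deriv S (φ (σ (r,r')) r') * ψ (σ (r,r')) r')
          ∂(lebOn Ω) := by
      intro r
      rw [ContinuousMap.sub_apply, ContinuousMap.sub_apply, hG (φ + ψ) r, hG φ r,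
        hDapp ψ r]
      rw [show (∫ r', J r r' * S ((φ + ψ) (projIcc (-h) 0 (by linarith) (-(τ r r'))) r')
            ∂(lebOn Ω))
          = ∫ r', J r r' * S ((φ + ψ) (σ (r,r')) r') ∂(lebOn Ω) from rfl,
        show (∫ r', J r r' * S (φ (projIcc (-h) 0 (by linarith) (-(τ r r'))) r')
            ∂(lebOn Ω))
          = ∫ r', J r r' * S (φ (σ (r,r')) r') ∂(lebOn Ω) from rfl]
      have h1 : Integrable (fun r' => J r r' * S ((φ + ψ) (σ (r,r')) r')
          - J r r' * S (φ (σ (r,r')) r')) (lebOn Ω) :=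
        (hGint (φ + ψ) r).sub (hGint φ r)
      rw [← integral_sub (hGint (φ + ψ) r) (hGint φ r),
        ← integral_sub h1 (hFint ψ r)]
      refine integral_congr_ae (Filter.Eventually.of_forall fun r' => ?_)
      show J r r' * S (φ (σ (r,r')) r' + ψ (σ (r,r')) r')
          - J r r' * S (φ (σ (r,r')) r')
          - J r r' * deriv S (φ (σ (r,r')) r') * ψ (σ (r,r')) r' = _
      ring
    have hψr : ∀ r : Ω, ‖(G (φ + ψ) - G φ - D ψ) r‖ ≤ (CJ * C₂ * (‖ψ‖ * ‖ψ‖)) * m := by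
      intro r
      rw [hrem r]
      have hb := norm_integral_le_of_norm_le_const (μ := lebOn Ω)
        (C := CJ * (C₂ * (‖ψ‖ * ‖ψ‖)))
        (Filter.Eventually.of_forall (fun r' => by
          rw [Real.norm_eq_abs, abs_mul]
          have hJ' := hJb (r, r')
          have h1 := hevb ψ (r, r')
          have h2 := key (φ (σ (r,r')) r') (ψ (σ (r,r')) r')
          calc |J r r'| * |S (φ (σ (r,r')) r' + ψ (σ (r,r')) r')
                - S (φ (σ (r,r')) r') - deriv S (φ (σ (r,r')) r') * ψ (σ (r,r')) r'|
              ≤ CJ * (C₂ * (|ψ (σ (r,r')) r'| * |ψ (σ (r,r')) r'|)) :=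
                mul_le_mul hJ' h2 (abs_nonneg _) hCJ0
            _ ≤ CJ * (C₂ * (‖ψ‖ * ‖ψ‖)) := by
                apply mul_le_mul_of_nonneg_left _ hCJ0
                apply mul_le_mul_of_nonneg_left _ hC20
                exact mul_le_mul h1 h1 (abs_nonneg _) hψ0))
      calc ‖∫ r', J r r' * (S (φ (σ (r,r')) r' + ψ (σ (r,r')) r')
            - S (φ (σ (r,r')) r') - deriv S (φ (σ (r,r')) r') * ψ (σ (r,r')) r')
            ∂(lebOn Ω)‖
          ≤ CJ * (C₂ * (‖ψ‖ * ‖ψ‖)) * m := hb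
        _ = CJ * C₂ * (‖ψ‖ * ‖ψ‖) * m := by ring
    have hnn : (0:ℝ) ≤ ‖ψ‖ * ‖ψ‖ := mul_nonneg hψ0 hψ0
    have hK0 : (0:ℝ) ≤ (CJ * C₂ * (‖ψ‖ * ‖ψ‖)) * m :=
      mul_nonneg (mul_nonneg (mul_nonneg hCJ0 hC20) hnn) hm0
    calc ‖G (φ + ψ) - G φ - D ψ‖ ≤ (CJ * C₂ * (‖ψ‖ * ‖ψ‖)) * m :=
        (ContinuousMap.norm_le _ hK0).2 hψr
      _ = CJ * C₂ * m * (‖ψ‖ ^ 2) := by ring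
      _ = CJ * C₂ * m * ‖‖ψ‖ ^ 2‖ := by
          rw [Real.norm_eq_abs, abs_of_nonneg (by positivity)]
  have hsmall : (fun ψ : C(Icc (-h) (0:ℝ), C(Ω,ℝ)) => ‖ψ‖ ^ 2)
      =o[nhds 0] (fun ψ => ψ) :=
    by
      have h2 := Asymptotics.isLittleO_norm_pow_id
        (E' := C(Icc (-h) (0:ℝ), C(Ω,ℝ))) (n := 2) one_lt_two
      exact h2
  exact hbig.trans_isLittleO hsmall
end

section
/- For every α > 0 and every initial condition φ ∈ X, the delayed neural field problem has a unique global solution: there exists a unique function V : [−h,∞) → Y which is continuous on [−h,∞), continuously differentiable on [0,∞), satisfies V(t) = φ(t) for all t ∈ [−h,0], and satisfies V′(t) = −α·V(t) + G(V_t) for all t ≥ 0, where V_t ∈ X denotes the history segment V_t(θ) := V(t+θ) for θ ∈ [−h,0]. -/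
open MeasureTheory Set

section DelayAbstract
set_option linter.unusedSectionVars false
set_option maxHeartbeats 1000000

variable {Y : Type*} [NormedAddCommGroup Y] [NormedSpace ℝ Y] [CompleteSpace Y]

noncomputable def histSeg (h : ℝ) (V : C(ℝ, Y)) (t : ℝ) : C(Icc (-h) 0, Y) :=
  V.comp ⟨fun θ => t + θ.1, by fun_prop⟩

lemma histSeg_apply (h : ℝ) (V : C(ℝ, Y)) (t : ℝ) (θ : Icc (-h) 0) :
    histSeg h V t θ = V (t + θ.1) := rfl

lemma continuous_histSeg (h : ℝ) (V : C(ℝ, Y)) : Continuous (histSeg h V) := by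
  have : histSeg h V = fun t =>
      (ContinuousMap.curry ⟨fun p : ℝ × Icc (-h) 0 => V (p.1 + p.2.1), by fun_prop⟩) t := by
    funext t; ext θ; rfl
  rw [this]
  exact (ContinuousMap.curry _).continuous

lemma integral_exp_mul_aux (γ : ℝ) (hγ : 0 < γ) (t : ℝ) :
    ∫ s in (0:ℝ)..t, Real.exp (γ * s) = (Real.exp (γ * t) - 1) / γ := by
  have hd : ∀ x : ℝ, HasDerivAt (fun s => Real.exp (γ * s) / γ) (Real.exp (γ * x)) x := by
    intro x
    have h1 : HasDerivAt (fun s : ℝ => γ * s) γ x := by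
      simpa using (hasDerivAt_id x).const_mul γ
    have h2 := (h1.exp).div_const γ
    exact h2.congr_deriv (mul_div_cancel_right₀ _ hγ.ne')
  have := intervalIntegral.integral_eq_sub_of_hasDerivAt (f := fun s => Real.exp (γ * s) / γ)
    (f' := fun s => Real.exp (γ * s)) (a := 0) (b := t)
    (fun x _ => hd x) ((by fun_prop : Continuous fun s : ℝ => Real.exp (γ * s)).intervalIntegrable 0 t)
  rw [this]
  simp [sub_div]

lemma histSeg_dist_le (h : ℝ) (V W : C(ℝ, Y)) (s C : ℝ) (hC : 0 ≤ C)
    (hp : ∀ θ : Icc (-h) 0, dist (V (s + θ.1)) (W (s + θ.1)) ≤ C) :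
    dist (histSeg h V s) (histSeg h W s) ≤ C :=
  (ContinuousMap.dist_le hC).2 fun θ => hp θ

lemma histSeg_norm_le (h : ℝ) (V : C(ℝ, Y)) (s C : ℝ) (hC : 0 ≤ C)
    (hp : ∀ θ : Icc (-h) 0, ‖V (s + θ.1)‖ ≤ C) : ‖histSeg h V s‖ ≤ C := by
  rw [ContinuousMap.norm_le _ hC]
  exact fun θ => hp θ

theorem delay_exists (h : ℝ) (hh : 0 < h) (H : C(Icc (-h) 0, Y) → Y) (K : NNReal)
    (hH : LipschitzWith K H) (φb : C(ℝ, Y)) (Cφ : ℝ) (hφbd : ∀ t, ‖φb t‖ ≤ Cφ)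
    (hφconst : ∀ t, 0 ≤ t → φb t = φb 0) :
    ∃ V : C(ℝ, Y), (∀ t, t ≤ 0 → V t = φb t) ∧
      ∀ t, 0 ≤ t → V t = φb 0 + ∫ s in (0:ℝ)..t, H (histSeg h V s) := by
  have hCφ : 0 ≤ Cφ := (norm_nonneg _).trans (hφbd 0)
  set γ : ℝ := (K : ℝ) + 1 with hγdef
  have hγ : 0 < γ := by positivity
  set E := BoundedContinuousFunction ℝ Y
  have Vofc : ∀ w : E, Continuous fun t => φb t + Real.exp (γ * t) • w t := by
    intro w; fun_prop
  set Vof : E → C(ℝ, Y) := fun w => ⟨fun t => φb t + Real.exp (γ * t) • w t, Vofc w⟩ with hVof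
  set F : E → ℝ → Y := fun w s => H (histSeg h (Vof w) s) with hF
  have hFc : ∀ w, Continuous (F w) := fun w =>
    hH.continuous.comp (continuous_histSeg h (Vof w))
  set B : ℝ := ‖H 0‖ + K * Cφ with hBdef
  have hB : 0 ≤ B := by positivity
  -- bound on F w
  have hFbd : ∀ w : E, ∀ s : ℝ, ‖F w s‖ ≤ B + (K * ‖w‖) * Real.exp (γ * s) := by
    intro w s
    have h1 : ‖F w s‖ ≤ ‖H 0‖ + K * ‖histSeg h (Vof w) s‖ := by
      have h0 : ‖H (histSeg h (Vof w) s) - H 0‖ ≤ K * ‖histSeg h (Vof w) s‖ := by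
        have := hH.dist_le_mul (histSeg h (Vof w) s) 0
        rwa [dist_eq_norm, dist_zero_right] at this
      calc ‖F w s‖ = ‖H 0 + (H (histSeg h (Vof w) s) - H 0)‖ := by rw [hF]; congr 1; abel
        _ ≤ ‖H 0‖ + ‖H (histSeg h (Vof w) s) - H 0‖ := norm_add_le _ _
        _ ≤ ‖H 0‖ + K * ‖histSeg h (Vof w) s‖ := add_le_add le_rfl h0
    have h2 : ‖histSeg h (Vof w) s‖ ≤ Cφ + ‖w‖ * Real.exp (γ * s) := by
      apply histSeg_norm_le _ _ _ _ (by positivity)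
      intro θ
      have hθ : θ.1 ≤ 0 := θ.2.2
      show ‖φb (s + θ.1) + Real.exp (γ * (s + θ.1)) • w (s + θ.1)‖ ≤ _
      calc ‖φb (s + θ.1) + Real.exp (γ * (s + θ.1)) • w (s + θ.1)‖
          ≤ ‖φb (s + θ.1)‖ + Real.exp (γ * (s + θ.1)) * ‖w (s + θ.1)‖ := by
            refine (norm_add_le _ _).trans ?_
            rw [norm_smul, Real.norm_eq_abs, abs_of_pos (Real.exp_pos _)]
        _ ≤ Cφ + ‖w‖ * Real.exp (γ * s) := by
            refine add_le_add (hφbd _) ?_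
            rw [mul_comm (‖w‖)]
            exact mul_le_mul (Real.exp_le_exp.2 (by nlinarith)) (w.norm_coe_le_norm _)
              (norm_nonneg _) (Real.exp_pos _).le
    calc ‖F w s‖ ≤ ‖H 0‖ + K * ‖histSeg h (Vof w) s‖ := h1
      _ ≤ ‖H 0‖ + K * (Cφ + ‖w‖ * Real.exp (γ * s)) :=
          add_le_add le_rfl (mul_le_mul_of_nonneg_left h2 K.2)
      _ = B + (K * ‖w‖) * Real.exp (γ * s) := by rw [hBdef]; ring
  -- key integral estimate
  have hInt : ∀ (B' A : ℝ), 0 ≤ B' → 0 ≤ A → ∀ (f : ℝ → Y), Continuous f →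
      (∀ s, ‖f s‖ ≤ B' + A * Real.exp (γ * s)) → ∀ t : ℝ,
      ‖Real.exp (-(γ * t)) • ∫ s in (0:ℝ)..(max t 0), f s‖ ≤ (B' + A) / γ := by
    intro B' A hB' hA f hfc hfb t
    rcases le_or_gt t 0 with ht | ht
    · rw [max_eq_right ht, intervalIntegral.integral_same, smul_zero, norm_zero]
      positivity
    · rw [max_eq_left ht.le, norm_smul, Real.norm_eq_abs, abs_of_pos (Real.exp_pos _)]
      have h1 : ‖∫ s in (0:ℝ)..t, f s‖ ≤ ∫ s in (0:ℝ)..t, (B' + A * Real.exp (γ * s)) := by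
        refine (intervalIntegral.norm_integral_le_integral_norm ht.le).trans ?_
        refine intervalIntegral.integral_mono_on ht.le ?_ ?_ (fun s _ => hfb s)
        · exact (hfc.norm).intervalIntegrable 0 t
        · exact (by fun_prop : Continuous fun s : ℝ => B' + A * Real.exp (γ * s)).intervalIntegrable 0 t
      have h2 : ∫ s in (0:ℝ)..t, (B' + A * Real.exp (γ * s))
          = B' * t + A * ((Real.exp (γ * t) - 1) / γ) := by
        rw [intervalIntegral.integral_add (intervalIntegrable_const)
          ((by fun_prop : Continuous fun s : ℝ => A * Real.exp (γ * s)).intervalIntegrable 0 t),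
          intervalIntegral.integral_const_mul, integral_exp_mul_aux γ hγ,
          intervalIntegral.integral_const]
        simp [mul_comm]
      have hexp : Real.exp (-(γ * t)) * Real.exp (γ * t) = 1 := by
        rw [← Real.exp_add]; simp
      have hγt : γ * t ≤ Real.exp (γ * t) := by
        nlinarith [Real.add_one_le_exp (γ * t)]
      have he2 : (0:ℝ) < Real.exp (-(γ * t)) := Real.exp_pos _
      have hvt : Real.exp (-(γ * t)) * t ≤ 1 / γ := by
        rw [le_div_iff₀ hγ]
        nlinarith [mul_le_mul_of_nonneg_left hγt he2.le]
      have e2 : Real.exp (-(γ * t)) * ((Real.exp (γ * t) - 1) / γ) ≤ 1 / γ := by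
        rw [← mul_div_assoc, div_le_div_iff₀ hγ hγ]
        nlinarith
      calc Real.exp (-(γ * t)) * ‖∫ s in (0:ℝ)..t, f s‖
          ≤ Real.exp (-(γ * t)) * (B' * t + A * ((Real.exp (γ * t) - 1) / γ)) := by
            rw [← h2]; exact mul_le_mul_of_nonneg_left h1 he2.le
        _ = B' * (Real.exp (-(γ * t)) * t)
            + A * (Real.exp (-(γ * t)) * ((Real.exp (γ * t) - 1) / γ)) := by ring
        _ ≤ B' * (1 / γ) + A * (1 / γ) :=
            add_le_add (mul_le_mul_of_nonneg_left hvt hB') (mul_le_mul_of_nonneg_left e2 hA)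
        _ = (B' + A) / γ := by ring
  -- the fixed point map
  have hΦc : ∀ w : E, Continuous fun t : ℝ =>
      Real.exp (-(γ * t)) • ∫ s in (0:ℝ)..(max t 0), F w s := by
    intro w
    have h1 : Continuous fun b : ℝ => ∫ s in (0:ℝ)..b, F w s :=
      intervalIntegral.continuous_primitive (fun a b => (hFc w).intervalIntegrable a b) 0
    fun_prop
  have hΦbd : ∀ w : E, ∀ t : ℝ,
      ‖Real.exp (-(γ * t)) • ∫ s in (0:ℝ)..(max t 0), F w s‖ ≤ (B + K * ‖w‖) / γ :=
    fun w => hInt B (K * ‖w‖) hB (by positivity) (F w) (hFc w) (hFbd w)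
  set Φ : E → E := fun w => BoundedContinuousFunction.ofNormedAddCommGroup _ (hΦc w) _ (hΦbd w)
    with hΦdef
  have hΦapp : ∀ (w : E) (t : ℝ),
      Φ w t = Real.exp (-(γ * t)) • ∫ s in (0:ℝ)..(max t 0), F w s := fun w t => rfl
  -- contraction
  set c : NNReal := K / (K + 1) with hc
  have hcc : (c : ℝ) = (K : ℝ) / γ := by
    rw [hc, hγdef]; push_cast; rfl
  have hclt : c < 1 := by
    rw [hc]
    exact NNReal.div_lt_one_of_lt (lt_add_of_pos_right K one_pos)
  have hlip : LipschitzWith c Φ := by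
    apply LipschitzWith.of_dist_le_mul
    intro w₁ w₂
    set d := dist w₁ w₂ with hd
    have hd0 : 0 ≤ d := dist_nonneg
    rw [BoundedContinuousFunction.dist_le (by positivity : (0:ℝ) ≤ c * d)]
    intro t
    rw [hΦapp, hΦapp, dist_eq_norm, ← smul_sub,
      ← intervalIntegral.integral_sub ((hFc w₁).intervalIntegrable 0 _)
        ((hFc w₂).intervalIntegrable 0 _)]
    have hptw : ∀ s : ℝ, ‖F w₁ s - F w₂ s‖ ≤ 0 + ((K : ℝ) * d) * Real.exp (γ * s) := by
      intro s
      rw [zero_add]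
      have hhd : dist (histSeg h (Vof w₁) s) (histSeg h (Vof w₂) s) ≤ d * Real.exp (γ * s) := by
        apply histSeg_dist_le _ _ _ _ _ (by positivity)
        intro θ
        have hθ : θ.1 ≤ 0 := θ.2.2
        show dist (φb (s + θ.1) + Real.exp (γ * (s + θ.1)) • w₁ (s + θ.1))
          (φb (s + θ.1) + Real.exp (γ * (s + θ.1)) • w₂ (s + θ.1)) ≤ _
        rw [dist_add_left, dist_smul₀, Real.norm_eq_abs, abs_of_pos (Real.exp_pos _)]
        calc Real.exp (γ * (s + θ.1)) * dist (w₁ (s + θ.1)) (w₂ (s + θ.1))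
            ≤ Real.exp (γ * s) * d := by
              exact mul_le_mul (Real.exp_le_exp.2 (by nlinarith))
                (BoundedContinuousFunction.dist_coe_le_dist _) dist_nonneg (Real.exp_pos _).le
          _ = d * Real.exp (γ * s) := mul_comm _ _
      calc ‖F w₁ s - F w₂ s‖ = dist (F w₁ s) (F w₂ s) := (dist_eq_norm _ _).symm
        _ ≤ K * dist (histSeg h (Vof w₁) s) (histSeg h (Vof w₂) s) := hH.dist_le_mul _ _
        _ ≤ K * (d * Real.exp (γ * s)) := mul_le_mul_of_nonneg_left hhd K.2
        _ = ((K : ℝ) * d) * Real.exp (γ * s) := by ring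
    have := hInt 0 ((K : ℝ) * d) le_rfl (by positivity)
      (fun s => F w₁ s - F w₂ s) ((hFc w₁).sub (hFc w₂)) hptw t
    calc ‖Real.exp (-(γ * t)) • ∫ s in (0:ℝ)..(max t 0), (F w₁ s - F w₂ s)‖
        ≤ (0 + (K : ℝ) * d) / γ := this
      _ = (c : ℝ) * d := by rw [hcc]; ring
  have hcontr : ContractingWith c Φ := ⟨hclt, hlip⟩
  set w := hcontr.fixedPoint Φ with hw
  have hfix : Φ w = w := hcontr.fixedPoint_isFixedPt
  refine ⟨Vof w, ?_, ?_⟩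
  · intro t ht
    have hwt : w t = 0 := by
      have h1 : Φ w t = w t := by rw [hfix]
      rw [← h1, hΦapp, max_eq_right ht, intervalIntegral.integral_same, smul_zero]
    show φb t + Real.exp (γ * t) • w t = φb t
    rw [hwt, smul_zero, add_zero]
  · intro t ht
    have hwt : w t = Real.exp (-(γ * t)) • ∫ s in (0:ℝ)..t, F w s := by
      conv_lhs => rw [← hfix]
      rw [hΦapp, max_eq_left ht]
    show φb t + Real.exp (γ * t) • w t = _
    rw [hφconst t ht, hwt, smul_smul, ← Real.exp_add]
    ring_nf
    simp
    rfl

theorem delay_unique (h : ℝ) (hh : 0 < h) (H : C(Icc (-h) 0, Y) → Y) (K : NNReal)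
    (hH : LipschitzWith K H) (V W : C(ℝ, Y)) (hVW0 : ∀ t, t ≤ 0 → V t = W t)
    (hV : ∀ t, 0 ≤ t → V t = V 0 + ∫ s in (0:ℝ)..t, H (histSeg h V s))
    (hW : ∀ t, 0 ≤ t → W t = W 0 + ∫ s in (0:ℝ)..t, H (histSeg h W s)) :
    ∀ t, V t = W t := by
  set γ : ℝ := (K : ℝ) + 1 with hγdef
  have hγ : 0 < γ := by positivity
  have hVc : Continuous fun s => H (histSeg h V s) :=
    hH.continuous.comp (continuous_histSeg h V)
  have hWc : Continuous fun s => H (histSeg h W s) :=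
    hH.continuous.comp (continuous_histSeg h W)
  intro t₀
  rcases le_or_gt t₀ 0 with ht₀ | ht₀
  · exact hVW0 t₀ ht₀
  set b := t₀ with hb
  set g : ℝ → ℝ := fun t => Real.exp (-(γ * t)) * dist (V t) (W t) with hg
  have hgc : Continuous g := by fun_prop
  have hg0 : ∀ t, 0 ≤ g t := fun t => mul_nonneg (Real.exp_pos _).le dist_nonneg
  obtain ⟨m, hm, hmax'⟩ := isCompact_Icc.exists_isMaxOn (s := Icc (0:ℝ) t₀)
    ⟨0, le_refl 0, ht₀.le⟩ hgc.continuousOn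
  have hmax : ∀ x ∈ Icc (0:ℝ) t₀, g x ≤ g m := fun x hx => hmax' hx
  set d := g m with hdd
  have hd0 : 0 ≤ d := hg0 m
  -- the key estimate
  have key : ∀ t, t ∈ Icc (0:ℝ) b → dist (V t) (W t)
      ≤ (K : ℝ) * d * ((Real.exp (γ * t) - 1) / γ) := by
    intro t ⟨ht0, htb⟩
    have hsub : V t - W t = ∫ s in (0:ℝ)..t, (H (histSeg h V s) - H (histSeg h W s)) := by
      rw [intervalIntegral.integral_sub (hVc.intervalIntegrable 0 t) (hWc.intervalIntegrable 0 t)]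
      conv_lhs => rw [hV t ht0, hW t ht0, hVW0 0 le_rfl]
      abel
    have hptw : ∀ s, s ∈ Icc (0:ℝ) t →
        ‖H (histSeg h V s) - H (histSeg h W s)‖ ≤ (K : ℝ) * d * Real.exp (γ * s) := by
      intro s ⟨hs0, hst⟩
      have hhd : dist (histSeg h V s) (histSeg h W s) ≤ d * Real.exp (γ * s) := by
        apply histSeg_dist_le _ _ _ _ _ (by positivity)
        intro θ
        have hθh : -h ≤ θ.1 := θ.2.1
        have hθ0 : θ.1 ≤ 0 := θ.2.2
        rcases le_or_gt (s + θ.1) 0 with hu | hu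
        · rw [hVW0 _ hu, dist_self]
          positivity
        · have hub : s + θ.1 ≤ b := by linarith
          have := hmax (s + θ.1) ⟨hu.le, hub⟩
          have hrw : dist (V (s + θ.1)) (W (s + θ.1))
              = Real.exp (γ * (s + θ.1)) * g (s + θ.1) := by
            rw [hg]
            rw [← mul_assoc, ← Real.exp_add]
            simp
          rw [hrw]
          calc Real.exp (γ * (s + θ.1)) * g (s + θ.1)
              ≤ Real.exp (γ * s) * d :=
                mul_le_mul (Real.exp_le_exp.2 (by nlinarith)) this (hg0 _) (Real.exp_pos _).le
            _ = d * Real.exp (γ * s) := mul_comm _ _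
      calc ‖H (histSeg h V s) - H (histSeg h W s)‖
          = dist (H (histSeg h V s)) (H (histSeg h W s)) := (dist_eq_norm _ _).symm
        _ ≤ K * dist (histSeg h V s) (histSeg h W s) := hH.dist_le_mul _ _
        _ ≤ K * (d * Real.exp (γ * s)) := mul_le_mul_of_nonneg_left hhd K.2
        _ = (K : ℝ) * d * Real.exp (γ * s) := by ring
    calc dist (V t) (W t) = ‖V t - W t‖ := dist_eq_norm _ _
      _ = ‖∫ s in (0:ℝ)..t, (H (histSeg h V s) - H (histSeg h W s))‖ := by rw [hsub]
      _ ≤ ∫ s in (0:ℝ)..t, ‖H (histSeg h V s) - H (histSeg h W s)‖ :=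
          intervalIntegral.norm_integral_le_integral_norm ht0
      _ ≤ ∫ s in (0:ℝ)..t, (K : ℝ) * d * Real.exp (γ * s) := by
          refine intervalIntegral.integral_mono_on ht0 ?_ ?_ hptw
          · exact ((hVc.sub hWc).norm).intervalIntegrable 0 t
          · exact (by fun_prop : Continuous fun s : ℝ =>
              (K : ℝ) * d * Real.exp (γ * s)).intervalIntegrable 0 t
      _ = (K : ℝ) * d * ((Real.exp (γ * t) - 1) / γ) := by
          rw [intervalIntegral.integral_const_mul, integral_exp_mul_aux γ hγ]
  -- conclude d = 0
  have hgle : ∀ t, t ∈ Icc (0:ℝ) b → g t ≤ ((K : ℝ) / γ) * d := by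
    intro t ht
    have h1 := key t ht
    have hexp : Real.exp (-(γ * t)) * Real.exp (γ * t) = 1 := by
      rw [← Real.exp_add]; simp
    have he2 : (0:ℝ) < Real.exp (-(γ * t)) := Real.exp_pos _
    have e2 : Real.exp (-(γ * t)) * ((Real.exp (γ * t) - 1) / γ) ≤ 1 / γ := by
      rw [← mul_div_assoc, div_le_div_iff₀ hγ hγ]
      nlinarith
    calc g t = Real.exp (-(γ * t)) * dist (V t) (W t) := rfl
      _ ≤ Real.exp (-(γ * t)) * ((K : ℝ) * d * ((Real.exp (γ * t) - 1) / γ)) :=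
          mul_le_mul_of_nonneg_left h1 he2.le
      _ = ((K : ℝ) * d) * (Real.exp (-(γ * t)) * ((Real.exp (γ * t) - 1) / γ)) := by ring
      _ ≤ ((K : ℝ) * d) * (1 / γ) :=
          mul_le_mul_of_nonneg_left e2 (by positivity)
      _ = ((K : ℝ) / γ) * d := by ring
  have hdz : d = 0 := by
    have h1 := hgle m hm
    have hKγ : (K : ℝ) / γ < 1 := by
      rw [div_lt_one hγ, hγdef]
      linarith
    nlinarith
  have := key b ⟨ht₀.le, le_refl b⟩
  rw [hdz] at this
  simp only [mul_zero, zero_mul] at this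
  have : dist (V t₀) (W t₀) ≤ 0 := this
  have := le_antisymm this dist_nonneg
  exact dist_eq_zero.1 this

end DelayAbstract

/-- For every `α > 0` and every initial condition `φ ∈ X`, the delayed
neural field problem has a unique global solution `V : [−h,∞) → Y`: `V` is continuous on
`[−h,∞)`, continuously differentiable on `[0,∞)`, `V(t) = φ(t)` on `[−h,0]`, and
`V′(t) = −α·V(t) + G(V_t)` for `t ≥ 0`, where `V_t(θ) = V(t+θ)`. -/
theorem stmt4
    {n : ℕ} {Ω : Set (EuclideanSpace ℝ (Fin n))} [CompactSpace Ω]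
    (hΩmeas : MeasurableSet Ω) (hΩpos : 0 < volume Ω) (hΩfin : volume Ω < ⊤)
    {h : ℝ} (hh : 0 < h)
    (J : Ω → Ω → ℝ) (hJ : Continuous fun p : Ω × Ω => J p.1 p.2)
    (S : ℝ → ℝ) (hS : ContDiff ℝ (⊤ : ℕ∞) S)
    (hSbd : ∀ k : ℕ, ∃ C : ℝ, ∀ u : ℝ, |iteratedDeriv k S u| ≤ C)
    (τ : Ω → Ω → ℝ) (hτc : Continuous fun p : Ω × Ω => τ p.1 p.2)
    (hτ : ∀ r r' : Ω, τ r r' ∈ Icc 0 h)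
    (G : (ℝ → C(Ω, ℝ)) → C(Ω, ℝ))
    (hG : ∀ (u : ℝ → C(Ω, ℝ)) (r : Ω),
      G u r = ∫ r' : Ω, J r r' * S (u (-(τ r r')) r') ∂(lebOn Ω))
    (α : ℝ) (hα : 0 < α)
    (φ : ℝ → C(Ω, ℝ)) (hφ : ContinuousOn φ (Icc (-h) 0)) :
    ∃ V : ℝ → C(Ω, ℝ),
      (ContinuousOn V (Ici (-h)) ∧
        (∀ t ∈ Icc (-h) (0 : ℝ), V t = φ t) ∧
        (∀ t ∈ Ici (0 : ℝ),
          HasDerivWithinAt V ((-α) • V t + G fun θ => V (t + θ)) (Ici 0) t) ∧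
        ContinuousOn (fun t => (-α) • V t + G fun θ => V (t + θ)) (Ici 0)) ∧
      ∀ W : ℝ → C(Ω, ℝ),
        (ContinuousOn W (Ici (-h)) ∧
          (∀ t ∈ Icc (-h) (0 : ℝ), W t = φ t) ∧
          (∀ t ∈ Ici (0 : ℝ),
            HasDerivWithinAt W ((-α) • W t + G fun θ => W (t + θ)) (Ici 0) t) ∧
          ContinuousOn (fun t => (-α) • W t + G fun θ => W (t + θ)) (Ici 0)) →
        EqOn W V (Ici (-h)) := by
  have hle : (-h : ℝ) ≤ 0 := by linarith
  have h0mem : (0:ℝ) ∈ Icc (-h) 0 := ⟨hle, le_refl 0⟩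
  -- finite measure
  have hemb : MeasurableEmbedding (Subtype.val : Ω → EuclideanSpace ℝ (Fin n)) :=
    MeasurableEmbedding.subtype_coe hΩmeas
  have huniv : lebOn Ω univ = volume Ω := by
    rw [lebOn, Measure.comap_apply _ Subtype.val_injective
      (fun s hs => hemb.measurableSet_image' hs) _ MeasurableSet.univ]
    rw [image_univ, Subtype.range_coe]
  haveI : IsFiniteMeasure (lebOn Ω) := ⟨by rw [huniv]; exact hΩfin⟩
  set vol : ℝ := ((lebOn Ω) univ).toReal with hvol
  have hvol0 : 0 ≤ vol := ENNReal.toReal_nonneg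
  -- integrability of continuous functions
  have hIntg : ∀ f : Ω → ℝ, Continuous f → Integrable f (lebOn Ω) := by
    intro f hf
    have hb := (⟨f, hf⟩ : C(Ω, ℝ)).norm_coe_le_norm
    exact (integrable_const (‖(⟨f, hf⟩ : C(Ω, ℝ))‖)).mono'
      hf.aestronglyMeasurable (Filter.Eventually.of_forall fun x => hb x)
  -- bounds
  set Jc : C(Ω × Ω, ℝ) := ⟨fun p => J p.1 p.2, hJ⟩ with hJc
  set MJ : ℝ := ‖Jc‖ with hMJdef
  have hMJ : ∀ r r' : Ω, |J r r'| ≤ MJ := by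
    intro r r'
    have := Jc.norm_coe_le_norm (r, r')
    rwa [Real.norm_eq_abs] at this
  have hMJ0 : 0 ≤ MJ := norm_nonneg _
  obtain ⟨C1, hC1⟩ := hSbd 1
  rw [iteratedDeriv_one] at hC1
  have hC10 : 0 ≤ C1 := (abs_nonneg _).trans (hC1 0)
  have hSdiff : Differentiable ℝ S := hS.differentiable (by simp)
  have hSlipW : LipschitzWith C1.toNNReal S := by
    apply lipschitzWith_of_nnnorm_deriv_le hSdiff
    intro x
    rw [← NNReal.coe_le_coe, coe_nnnorm, Real.coe_toNNReal _ hC10, Real.norm_eq_abs]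
    exact hC1 x
  have hSlip : ∀ a b : ℝ, |S a - S b| ≤ C1 * |a - b| := by
    intro a b
    have := hSlipW.dist_le_mul a b
    rwa [Real.dist_eq, Real.dist_eq, Real.coe_toNNReal _ hC10] at this
  -- G only depends on values on Icc (-h) 0
  have hGcongr : ∀ u v : ℝ → C(Ω, ℝ), EqOn u v (Icc (-h) 0) → G u = G v := by
    intro u v huv
    ext r
    rw [hG, hG]
    congr 1
    funext r'
    have hmem : -τ r r' ∈ Icc (-h) 0 :=
      ⟨neg_le_neg (hτ r r').2, neg_nonpos.2 (hτ r r').1⟩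
    rw [huv hmem]
  -- the Nemytskii-type operator on histories
  set Gp : C(Icc (-h) 0, C(Ω, ℝ)) → C(Ω, ℝ) :=
    fun u => G (fun θ => u (projIcc (-h) 0 hle θ)) with hGp
  have hGpc : ∀ (u : C(Icc (-h) 0, C(Ω, ℝ))) (r : Ω),
      Continuous fun r' : Ω => J r r' * S (u (projIcc (-h) 0 hle (-(τ r r'))) r') := by
    intro u r
    have h1 : Continuous fun r' : Ω => τ r r' := hτc.comp (Continuous.prodMk_right r)
    have h2 : Continuous fun r' : Ω =>
        ((projIcc (-h) 0 hle (-(τ r r')), r') : ↑(Icc (-h) 0) × Ω) :=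
      ((continuous_projIcc.comp h1.neg)).prodMk continuous_id
    have h3 : Continuous fun q : ↑(Icc (-h) 0) × Ω => u q.1 q.2 := u.uncurry.continuous
    have h4 : Continuous fun r' : Ω => J r r' := hJ.comp (Continuous.prodMk_right r)
    exact h4.mul ((hS.continuous.comp (h3.comp h2)))
  have hGpapp : ∀ (u : C(Icc (-h) 0, C(Ω, ℝ))) (r : Ω),
      Gp u r = ∫ r' : Ω, J r r' * S (u (projIcc (-h) 0 hle (-(τ r r'))) r') ∂(lebOn Ω) := by
    intro u r
    rw [hGp, hG]
  have hGpLip : ∀ u v : C(Icc (-h) 0, C(Ω, ℝ)),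
      dist (Gp u) (Gp v) ≤ (MJ * C1 * vol) * dist u v := by
    intro u v
    rw [ContinuousMap.dist_le (by positivity)]
    intro r
    rw [Real.dist_eq, hGpapp, hGpapp,
      ← integral_sub (hIntg _ (hGpc u r)) (hIntg _ (hGpc v r))]
    have hbd : ∀ r' : Ω,
        ‖J r r' * S (u (projIcc (-h) 0 hle (-(τ r r'))) r')
          - J r r' * S (v (projIcc (-h) 0 hle (-(τ r r'))) r')‖
          ≤ MJ * C1 * dist u v := by
      intro r'
      set θ := projIcc (-h) 0 hle (-(τ r r'))
      rw [Real.norm_eq_abs, ← mul_sub, abs_mul]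
      have hd1 : dist (u θ r') (v θ r') ≤ dist u v :=
        le_trans (ContinuousMap.dist_apply_le_dist r') (ContinuousMap.dist_apply_le_dist θ)
      rw [Real.dist_eq] at hd1
      calc |J r r'| * |S (u θ r') - S (v θ r')|
          ≤ MJ * (C1 * |u θ r' - v θ r'|) :=
            mul_le_mul (hMJ r r') (hSlip _ _) (abs_nonneg _)
              hMJ0
        _ ≤ MJ * (C1 * dist u v) := by
            refine mul_le_mul_of_nonneg_left (mul_le_mul_of_nonneg_left hd1 hC10) hMJ0
        _ = MJ * C1 * dist u v := by ring
    have habs : |∫ r' : Ω, (J r r' * S (u (projIcc (-h) 0 hle (-(τ r r'))) r')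
          - J r r' * S (v (projIcc (-h) 0 hle (-(τ r r'))) r')) ∂(lebOn Ω)|
        ≤ (MJ * C1 * dist u v) * vol := by
      have := norm_integral_le_of_norm_le_const (μ := lebOn Ω)
        (f := fun r' : Ω => (J r r' * S (u (projIcc (-h) 0 hle (-(τ r r'))) r')
          - J r r' * S (v (projIcc (-h) 0 hle (-(τ r r'))) r')))
        (C := MJ * C1 * dist u v) (Filter.Eventually.of_forall hbd)
      rwa [Real.norm_eq_abs] at this
    calc _ ≤ (MJ * C1 * dist u v) * vol := habs
      _ = MJ * C1 * vol * dist u v := by ring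
  -- the full right-hand side operator on histories
  set H : C(Icc (-h) 0, C(Ω, ℝ)) → C(Ω, ℝ) :=
    fun u => (-α) • u ⟨0, h0mem⟩ + Gp u with hHdef
  set KH : NNReal := ‖α‖₊ + (MJ * C1 * vol).toNNReal with hKH
  have hHLip : LipschitzWith KH H := by
    have p1 : LipschitzWith ‖α‖₊ (fun u : C(Icc (-h) 0, C(Ω, ℝ)) => (-α) • u ⟨0, h0mem⟩) := by
      apply LipschitzWith.of_dist_le_mul
      intro u v
      show dist ((-α) • u ⟨0, h0mem⟩) ((-α) • v ⟨0, h0mem⟩) ≤ _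
      rw [dist_eq_norm, ← smul_sub, norm_smul, norm_neg, ← dist_eq_norm, coe_nnnorm,
        Real.norm_eq_abs, ← Real.norm_eq_abs]
      exact mul_le_mul_of_nonneg_left (ContinuousMap.dist_apply_le_dist _) (norm_nonneg α)
    have p2 : LipschitzWith (MJ * C1 * vol).toNNReal Gp := by
      apply LipschitzWith.of_dist_le_mul
      intro u v
      rw [Real.coe_toNNReal _ (by positivity)]
      exact hGpLip u v
    exact p1.add p2
  -- extended initial condition
  set φr : C(Icc (-h) 0, C(Ω, ℝ)) := ⟨(Icc (-h) 0).restrict φ, hφ.restrict⟩ with hφr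
  set φb : C(ℝ, C(Ω, ℝ)) := φr.comp ⟨projIcc (-h) 0 hle, continuous_projIcc⟩ with hφb
  have hφb_eq : ∀ t ∈ Icc (-h) (0:ℝ), φb t = φ t := by
    intro t ht
    show φr (projIcc (-h) 0 hle t) = φ t
    rw [projIcc_of_mem hle ht]
    rfl
  have hφbd : ∀ t, ‖φb t‖ ≤ ‖φr‖ := fun t => φr.norm_coe_le_norm _
  have hφconst : ∀ t, 0 ≤ t → φb t = φb 0 := by
    intro t ht
    show φr (projIcc (-h) 0 hle t) = φr (projIcc (-h) 0 hle 0)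
    rw [projIcc_of_right_le hle ht, projIcc_of_mem hle h0mem]
  have hφb_neg : ∀ t : ℝ, t ≤ 0 → φb t = φ (max (-h) t) := by
    intro t ht
    show φr (projIcc (-h) 0 hle t) = φ (max (-h) t)
    have hproj : projIcc (-h) 0 hle t = ⟨max (-h) t,
        ⟨le_max_left _ _, max_le hle ht⟩⟩ := by
      apply Subtype.ext
      show max (-h) (min 0 t) = max (-h) t
      rw [min_eq_right ht]
    rw [hproj]
    rfl
  -- existence
  obtain ⟨V, hV0, hVeq⟩ := delay_exists h hh H KH hHLip φb ‖φr‖ hφbd hφconst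
  -- the bridge between H on histories and the RHS in the statement
  have hbridge : ∀ (U : C(ℝ, C(Ω, ℝ))) (t : ℝ),
      H (histSeg h U t) = (-α) • U t + G (fun θ => U (t + θ)) := by
    intro U t
    show (-α) • (histSeg h U t) ⟨0, h0mem⟩ + Gp (histSeg h U t) = _
    have e1 : (histSeg h U t) ⟨0, h0mem⟩ = U t := by
      rw [histSeg_apply, add_zero]
    have e2 : Gp (histSeg h U t) = G (fun θ => U (t + θ)) := by
      rw [hGp]
      apply hGcongr
      intro θ hθ
      show (histSeg h U t) (projIcc (-h) 0 hle θ) = U (t + θ)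
      rw [projIcc_of_mem hle hθ, histSeg_apply]
    rw [e1, e2]
  have hFcc : Continuous fun s => H (histSeg h V s) :=
    hHLip.continuous.comp (continuous_histSeg h V)
  have hVeq' : ∀ t, 0 ≤ t → V t = V 0 + ∫ s in (0:ℝ)..t, H (histSeg h V s) := by
    intro t ht
    rw [hVeq t ht, hV0 0 le_rfl]
  refine ⟨⇑V, ⟨V.continuous.continuousOn, ?_, ?_, ?_⟩, ?_⟩
  · intro t ht
    rw [hV0 t ht.2, hφb_eq t ht]
  · intro t ht
    have hprim : HasDerivAt (fun u => φb 0 + ∫ s in (0:ℝ)..u, H (histSeg h V s))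
        (H (histSeg h V t)) t := by
      exact HasDerivAt.const_add _
        (intervalIntegral.integral_hasDerivAt_right (hFcc.intervalIntegrable 0 t)
          (hFcc.stronglyMeasurableAtFilter _ _) hFcc.continuousAt)
    have hVd : HasDerivWithinAt (⇑V) (H (histSeg h V t)) (Ici 0) t :=
      (hprim.hasDerivWithinAt).congr (fun y hy => hVeq y hy) (hVeq t ht)
    rwa [hbridge V t] at hVd
  · have : (fun t => (-α) • V t + G fun θ => V (t + θ))
        = fun t => H (histSeg h V t) := funext fun t => (hbridge V t).symm
    rw [this]
    exact hFcc.continuousOn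
  · rintro W ⟨hWc, hW0, hWd, _⟩ t ht
    -- extend W to a globally continuous map
    have hmaxc : Continuous fun t : ℝ => max t (-h) := continuous_id.max continuous_const
    set Wc : C(ℝ, C(Ω, ℝ)) := ⟨fun t => W (max t (-h)),
      hWc.comp_continuous hmaxc (fun x => mem_Ici.2 (le_max_right _ _))⟩ with hWcdef
    have hWcV : ∀ s : ℝ, -h ≤ s → Wc s = W s := by
      intro s hs
      show W (max s (-h)) = W s
      rw [max_eq_left hs]
    have hWc0 : ∀ s : ℝ, s ≤ 0 → Wc s = V s := by
      intro s hs
      have hmem : max s (-h) ∈ Icc (-h) (0:ℝ) := ⟨le_max_right _ _, max_le hs hle⟩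
      have : Wc s = φ (max s (-h)) := hW0 _ hmem
      rw [this, hV0 s hs, hφb_neg s hs, max_comm]
    have hHW : ∀ s : ℝ, 0 ≤ s →
        H (histSeg h Wc s) = (-α) • W s + G (fun θ => W (s + θ)) := by
      intro s hs
      rw [hbridge Wc s, hWcV s (hle.trans hs)]
      congr 1
      apply hGcongr
      intro θ hθ
      show Wc (s + θ) = W (s + θ)
      exact hWcV _ (by have := hθ.1; linarith)
    have hWcd : ∀ s, 0 ≤ s → HasDerivWithinAt (⇑Wc) (H (histSeg h Wc s)) (Ici 0) s := by
      intro s hs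
      have hd := hWd s hs
      rw [← hHW s hs] at hd
      exact hd.congr (fun y hy => hWcV y (hle.trans hy)) (hWcV s (hle.trans hs))
    have hWcc : Continuous fun s => H (histSeg h Wc s) :=
      hHLip.continuous.comp (continuous_histSeg h Wc)
    have hWceq : ∀ s, 0 ≤ s → Wc s = Wc 0 + ∫ u in (0:ℝ)..s, H (histSeg h Wc u) := by
      intro s hs
      rcases eq_or_lt_of_le hs with hs0 | hs0
      · rw [← hs0, intervalIntegral.integral_same, add_zero]
      have := intervalIntegral.integral_eq_sub_of_hasDeriv_right_of_le hs
        Wc.continuous.continuousOn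
        (fun x hx => (hWcd x hx.1.le).mono (fun y hy => (hx.1.trans hy).le))
        (hWcc.intervalIntegrable 0 s)
      rw [this]
      abel
    have hall := delay_unique h hh H KH hHLip Wc V hWc0 hWceq hVeq'
    show W t = V t
    rw [← hWcV t ht, hall t]
end

section
/- Let z ∈ ℂ with z ≠ −α, and suppose that the operator L_z ∈ L(Y), defined by L_z y := L(θ ↦ e^{zθ}·y), is compact. Then the range of z − A is closed in X; that is, the set { z·φ − φ′ : φ ∈ C¹([−h,0],Y) with φ′(0) = −α·φ(0) + Lφ } is a closed subset of X. -/
open Set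

/-- The continuous map `θ ↦ e^{zθ}·y` on `[-h,0]`, for `y` in a complex normed space. -/
noncomputable def expTensor {Y : Type*} [NormedAddCommGroup Y] [NormedSpace ℂ Y]
    (h : ℝ) (z : ℂ) (y : Y) : C(Set.Icc (-h) (0 : ℝ), Y) :=
  ⟨fun θ => Complex.exp (z * ((θ : ℝ) : ℂ)) • y, by fun_prop⟩

open Filter Topology intervalIntegral

private theorem isClosed_range_one_sub_compact {Y : Type*} [NormedAddCommGroup Y] [NormedSpace ℂ Y]
    [CompleteSpace Y] (K : Y →L[ℂ] Y) (hK : IsCompactOperator K) :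
    IsClosed (Set.range (ContinuousLinearMap.id ℂ Y - K)) := by
  set T : Y →L[ℂ] Y := ContinuousLinearMap.id ℂ Y - K with hT
  have hTx : ∀ x, T x = x - K x := fun x => rfl
  set N : Submodule ℂ Y := LinearMap.ker (T : Y →ₗ[ℂ] Y) with hN
  obtain ⟨Cset, hCc, hpre⟩ := hK
  obtain ⟨ε, hε, hball⟩ := Metric.mem_nhds_iff.1 hpre
  have hNclosed : IsClosed (N : Set Y) := ContinuousLinearMap.isClosed_ker T
  have hfix : ∀ x ∈ N, K x = x := by
    intro x hx
    have : x - K x = 0 := hx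
    linear_combination (norm := abel) -this
  -- kernel is finite dimensional
  have hfd : FiniteDimensional ℂ N := by
    have hsub : (N : Set Y) ∩ Metric.closedBall 0 (ε/2) ⊆ Cset := by
      rintro x ⟨hxN, hxb⟩
      rw [← hfix x hxN]
      apply hball
      rw [Metric.mem_ball, dist_zero_right]
      have := mem_closedBall_zero_iff.1 hxb
      linarith
    have hcomp : IsCompact ((N : Set Y) ∩ Metric.closedBall 0 (ε/2)) :=
      hCc.of_isClosed_subset (hNclosed.inter Metric.isClosed_closedBall) hsub
    have himg : (Subtype.val : N → Y) '' Metric.closedBall 0 (ε/2) =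
        (N : Set Y) ∩ Metric.closedBall 0 (ε/2) := by
      ext x
      simp only [Set.mem_image, Set.mem_inter_iff, Metric.mem_closedBall, SetLike.mem_coe]
      constructor
      · rintro ⟨y, hy, rfl⟩
        exact ⟨y.2, by simpa [dist_eq_norm] using hy⟩
      · rintro ⟨hx, hb⟩
        exact ⟨⟨x, hx⟩, by simpa [dist_eq_norm, Submodule.coe_norm] using hb, rfl⟩
    have : IsCompact (Metric.closedBall (0 : N) (ε/2)) := by
      rw [Topology.IsEmbedding.isCompact_iff (Topology.IsEmbedding.subtypeVal), himg]
      exact hcomp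
    exact FiniteDimensional.of_isCompact_closedBall ℂ (by linarith) this
  -- closed complement M
  obtain ⟨M, hMclosed, hcompl⟩ :=
    (Submodule.ClosedComplemented.of_finiteDimensional N).exists_isClosed_isCompl
  -- T is bounded below on M
  have hbdd : ∃ c : ℝ, 0 < c ∧ ∀ x ∈ M, ‖x‖ ≤ c * ‖T x‖ := by
    by_contra hcon
    push_neg at hcon
    -- for every n, get a unit vector in M with small T
    have hseq : ∀ n : ℕ, ∃ u : Y, u ∈ M ∧ ‖u‖ = 1 ∧ ‖T u‖ < 1 / (n + 1) := by
      intro n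
      obtain ⟨x, hxM, hx⟩ := hcon (n + 1) (by positivity)
      have hx0 : x ≠ 0 := by
        rintro rfl
        simp only [norm_zero] at hx
        nlinarith [norm_nonneg (T (0:Y)), (by positivity : (0:ℝ) < (n:ℝ)+1)]
      have hxpos : 0 < ‖x‖ := norm_pos_iff.2 hx0
      refine ⟨‖x‖⁻¹ • x, M.smul_mem _ hxM, ?_, ?_⟩
      · simp [norm_smul, inv_mul_cancel₀ hxpos.ne']
      · rw [T.map_smul_of_tower, norm_smul]
        simp only [norm_inv, norm_norm]
        have h1 : ‖x‖ * ‖x‖⁻¹ = 1 := mul_inv_cancel₀ hxpos.ne'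
        rw [lt_div_iff₀ (by positivity : (0:ℝ) < (n:ℝ)+1)]
        nlinarith [mul_lt_mul_of_pos_right hx (inv_pos.2 hxpos)]
    choose u huM hu1 huT using hseq
    -- compactness: extract convergent subsequence of K (ε/2 • u n)
    have hmem : ∀ n, K ((ε/2 : ℝ) • u n) ∈ Cset := by
      intro n
      apply hball
      rw [Metric.mem_ball, dist_zero_right, norm_smul, hu1]
      simp only [mul_one, Real.norm_eq_abs, abs_of_pos (by linarith : (0:ℝ) < ε/2)]
      linarith
    obtain ⟨w, -, φ, hφ, hlim⟩ := hCc.tendsto_subseq hmem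
    -- then (ε/2) • u (φ n) converges to w
    have h1 : Tendsto (fun n => (1:ℝ) / ((φ n : ℝ) + 1)) atTop (nhds 0) :=
      tendsto_one_div_add_atTop_nhds_zero_nat.comp hφ.tendsto_atTop
    have h0 : Tendsto (fun n => T (u (φ n))) atTop (nhds 0) := by
      rw [tendsto_zero_iff_norm_tendsto_zero]
      exact squeeze_zero (fun n => norm_nonneg _) (fun n => (huT (φ n)).le) h1
    have hTlim : Tendsto (fun n => T ((ε/2 : ℝ) • u (φ n))) atTop (nhds 0) := by
      have := h0.const_smul (ε/2 : ℝ)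
      simpa [T.map_smul_of_tower] using this
    have hulim : Tendsto (fun n => (ε/2 : ℝ) • u (φ n)) atTop (nhds w) := by
      have hadd := hTlim.add hlim
      rw [zero_add] at hadd
      exact hadd.congr fun n => by rw [hTx]; simp
    -- w ∈ M, ‖w‖ = ε/2, T w = 0
    have hwM : w ∈ M := hMclosed.mem_of_tendsto hulim
      (Filter.Eventually.of_forall fun n => M.smul_mem _ (huM (φ n)))
    have hwnorm : ‖w‖ = ε/2 := by
      have := hulim.norm
      have h2 : Tendsto (fun n => ‖(ε/2:ℝ) • u (φ n)‖) atTop (nhds (ε/2)) := by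
        simp only [norm_smul, hu1, mul_one, Real.norm_eq_abs, abs_of_pos (by linarith : (0:ℝ)<ε/2)]
        exact tendsto_const_nhds
      exact tendsto_nhds_unique this h2
    have hwN : w ∈ N := by
      have h2 : Tendsto (fun n => T ((ε/2:ℝ) • u (φ n))) atTop (nhds (T w)) :=
        (T.continuous.tendsto w).comp hulim
      exact LinearMap.mem_ker.2 (tendsto_nhds_unique h2 hTlim)
    have : w = 0 := by
      have := hcompl.inf_eq_bot ▸ Submodule.mem_inf.2 ⟨hwN, hwM⟩
      simpa using this
    rw [this, norm_zero] at hwnorm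
    linarith
  obtain ⟨c, hc, hcb⟩ := hbdd
  -- range T = T '' M, and that is closed
  have hrange : Set.range T = T '' (M : Set Y) := by
    apply Set.Subset.antisymm
    · rintro _ ⟨x, rfl⟩
      obtain ⟨n, m, hnN, hmM, rfl⟩ := Submodule.codisjoint_iff_exists_add_eq.mp hcompl.codisjoint x
      exact ⟨m, hmM, by rw [map_add]; simp [hnN, LinearMap.mem_ker.1 hnN]; exact LinearMap.mem_ker.1 hnN⟩
    · rintro _ ⟨m, _, rfl⟩
      exact ⟨m, rfl⟩
  rw [hrange]
  -- T restricted to M is antilipschitz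
  haveI : CompleteSpace M := hMclosed.completeSpace_coe
  set S : M →L[ℂ] Y := T.comp M.subtypeL with hS
  have hanti : AntilipschitzWith ⟨c, hc.le⟩ S :=
    S.antilipschitz_of_bound fun x => by
      exact hcb x x.2
  have : T '' (M : Set Y) = Set.range S := by
    ext y
    constructor
    · rintro ⟨m, hm, rfl⟩; exact ⟨⟨m, hm⟩, rfl⟩
    · rintro ⟨m, rfl⟩; exact ⟨m, m.2, rfl⟩
  rw [this]
  exact hanti.isClosed_range S.uniformContinuous

private theorem isClosed_range_smul_id_sub {Y : Type*} [NormedAddCommGroup Y] [NormedSpace ℂ Y]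
    [CompleteSpace Y] (K : Y →L[ℂ] Y) (hK : IsCompactOperator ⇑K) {a : ℂ} (ha : a ≠ 0) :
    IsClosed (Set.range fun y => a • y - K y) := by
  set T1 : Y →L[ℂ] Y := ContinuousLinearMap.id ℂ Y - a⁻¹ • K with hT1
  have key : (Set.range fun y => a • y - K y)
      = (Homeomorph.smul (Units.mk0 a ha)) '' Set.range ⇑T1 := by
    ext w
    simp only [Set.mem_image, Set.mem_range]
    constructor
    · rintro ⟨y, rfl⟩
      exact ⟨T1 y, ⟨y, rfl⟩, by
        simp [hT1, Units.smul_def, smul_sub, smul_smul, mul_inv_cancel₀ ha]⟩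
    · rintro ⟨v, ⟨y, rfl⟩, rfl⟩
      exact ⟨y, by
        simp [hT1, Units.smul_def, smul_sub, smul_smul, mul_inv_cancel₀ ha]⟩
  rw [key, Homeomorph.isClosed_image]
  have hK' : IsCompactOperator ⇑((a⁻¹ : ℂ) • K) := by
    have := hK.smul (a⁻¹ : ℂ)
    exact this
  exact isClosed_range_one_sub_compact _ hK'

private lemma aux_exp_bound (w : ℂ) {h θ : ℝ} (hh : 0 ≤ h) (hθ : θ ∈ Set.Icc (-h) 0) :
    ‖Complex.exp (w * θ)‖ ≤ Real.exp (‖w‖ * h) := by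
  rw [Complex.norm_exp]
  apply Real.exp_le_exp.2
  have h1 : (w * (θ:ℂ)).re = w.re * θ := by simp [Complex.mul_re]
  rw [h1]
  have hθh : |θ| ≤ h := by
    rw [abs_le]; exact ⟨by linarith [hθ.1], by linarith [hθ.2]⟩
  have h2 : |w.re * θ| ≤ ‖w‖ * h := by
    rw [abs_mul]
    exact mul_le_mul (Complex.abs_re_le_norm w) hθh (abs_nonneg _) (norm_nonneg w)
  linarith [le_abs_self (w.re * θ)]

private lemma aux_hasDerivAt_exp (w : ℂ) (t : ℝ) :
    HasDerivAt (fun θ : ℝ => Complex.exp (w * θ)) (w * Complex.exp (w * t)) t := by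
  have h1 : HasDerivAt (fun ζ : ℂ => Complex.exp (w * ζ)) (w * Complex.exp (w * t)) (t : ℂ) := by
    have := ((hasDerivAt_id (t : ℂ)).const_mul w).cexp
    simpa [mul_comm] using this
  exact h1.comp_ofReal

private lemma aux_hasDerivAt_primitive {Y : Type*} [NormedAddCommGroup Y] [NormedSpace ℂ Y]
    [CompleteSpace Y] {f : ℝ → Y} (hf : Continuous f) (t : ℝ) :
    HasDerivAt (fun θ => ∫ s in θ..0, f s) (-f t) t := by
  have h1 : HasDerivAt (fun u => ∫ s in (0:ℝ)..u, f s) (f t) t :=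
    integral_hasDerivAt_right (hf.intervalIntegrable _ _)
      (hf.stronglyMeasurableAtFilter _ _) hf.continuousAt
  have heq : (fun θ => ∫ s in θ..0, f s) = fun θ => -∫ s in (0:ℝ)..θ, f s :=
    funext fun θ => integral_symm _ _
  rw [heq]
  exact h1.neg

/-- Let `z ∈ ℂ`, `z ≠ −α`, and suppose the operator `L_z y := L(θ ↦ e^{zθ}y)`
is compact on `Y`. Then the range of `z − A` is closed in `X = C([−h,0],Y)`, i.e. the set
`{ z·φ − φ′ : φ ∈ C¹([−h,0],Y), φ′(0) = −α·φ(0) + Lφ }` is closed. -/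
theorem stmt5 {Y : Type*} [NormedAddCommGroup Y] [NormedSpace ℂ Y] [CompleteSpace Y]
    {h : ℝ} (hh : 0 < h)
    (L : C(Set.Icc (-h) (0 : ℝ), Y) →L[ℂ] Y) (α : ℂ) (z : ℂ) (hz : z ≠ -α)
    (hcompact : IsCompactOperator fun y : Y => L (expTensor h z y)) :
    IsClosed {ψ : C(Set.Icc (-h) (0 : ℝ), Y) |
      ∃ φ φ' : C(Set.Icc (-h) (0 : ℝ), Y),
        (∀ t : Set.Icc (-h) (0 : ℝ),
          HasDerivWithinAt (fun s : ℝ => φ (Set.projIcc (-h) 0 (by linarith) s))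
            (φ' t) (Set.Icc (-h) 0) (t : ℝ)) ∧
        φ' ⟨0, by constructor <;> linarith⟩ =
          (-α) • φ ⟨0, by constructor <;> linarith⟩ + L φ ∧
        ψ = z • φ - φ'} := by
  have hI : (-h : ℝ) ≤ 0 := by linarith
  have h0mem : (0:ℝ) ∈ Set.Icc (-h) (0:ℝ) := ⟨by linarith, le_refl 0⟩
  set X := C(Set.Icc (-h) (0 : ℝ), Y) with hX
  set pr : ℝ → Set.Icc (-h) (0:ℝ) := Set.projIcc (-h) 0 hI with hpr
  set E : ℝ := Real.exp (‖z‖ * h) with hE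
  have hEpos : (0:ℝ) < E := Real.exp_pos _
  -- continuity facts
  have contΨ : ∀ ψ : X, Continuous fun s : ℝ => ψ (pr s) :=
    fun ψ => ψ.continuous.comp continuous_projIcc
  have contf : ∀ ψ : X, Continuous fun s : ℝ => Complex.exp (-z * s) • ψ (pr s) := by
    intro ψ
    exact (Complex.continuous_exp.comp (continuous_const.mul
      Complex.continuous_ofReal)).smul (contΨ ψ)
  set P : X → ℝ → Y :=
    fun ψ θ => ∫ s in θ..(0:ℝ), Complex.exp (-z * s) • ψ (pr s) with hPdef
  have contP : ∀ ψ : X, Continuous (P ψ) := by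
    intro ψ
    have : Continuous fun θ : ℝ => ∫ s in (0:ℝ)..θ, Complex.exp (-z * s) • ψ (pr s) :=
      intervalIntegral.continuous_primitive
        (fun a b => ((contf ψ).intervalIntegrable a b)) 0
    have heq : P ψ = fun θ => -∫ s in (0:ℝ)..θ, Complex.exp (-z * s) • ψ (pr s) :=
      funext fun θ => intervalIntegral.integral_symm _ _
    rw [heq]; exact this.neg
  set G : X → X := fun ψ =>
    ⟨fun θ => Complex.exp (z * ((θ:ℝ):ℂ)) • P ψ (θ:ℝ),
      (Complex.continuous_exp.comp (continuous_const.mul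
        (Complex.continuous_ofReal.comp continuous_subtype_val))).smul
        ((contP ψ).comp continuous_subtype_val)⟩ with hGdef
  -- the compact operator L_z, bundled
  have hexpnorm : ∀ (y : Y), ‖expTensor h z y‖ ≤ E * ‖y‖ := by
    intro y
    apply (ContinuousMap.norm_le _ (by positivity)).2
    intro t
    show ‖Complex.exp (z * ((t:ℝ):ℂ)) • y‖ ≤ E * ‖y‖
    rw [norm_smul]
    exact mul_le_mul_of_nonneg_right (aux_exp_bound z hh.le t.2) (norm_nonneg y)
  set Lz : Y →L[ℂ] Y := LinearMap.mkContinuous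
    { toFun := fun y => L (expTensor h z y)
      map_add' := fun y₁ y₂ => by
        show L (expTensor h z (y₁ + y₂)) = L (expTensor h z y₁) + L (expTensor h z y₂)
        have he : expTensor h z (y₁ + y₂) = expTensor h z y₁ + expTensor h z y₂ := by
          ext t
          simp only [expTensor, ContinuousMap.coe_mk, ContinuousMap.add_apply]
          rw [smul_add]
        rw [he, map_add]
      map_smul' := fun a y => by
        simp only [RingHom.id_apply]
        show L (expTensor h z (a • y)) = a • L (expTensor h z y)
        have he : expTensor h z (a • y) = a • expTensor h z y := by
          ext t
          simp only [expTensor, ContinuousMap.coe_mk, ContinuousMap.smul_apply]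
          rw [smul_comm]
        rw [he, map_smul] }
    (‖L‖ * E)
    (fun y => by
      calc ‖L (expTensor h z y)‖ ≤ ‖L‖ * ‖expTensor h z y‖ := L.le_opNorm _
        _ ≤ ‖L‖ * (E * ‖y‖) :=
            mul_le_mul_of_nonneg_left (hexpnorm y) (norm_nonneg L)
        _ = ‖L‖ * E * ‖y‖ := by ring) with hLzdef
  have hLz_apply : ∀ y : Y, Lz y = L (expTensor h z y) := fun y => rfl
  -- `T = (z+α)·1 − L_z` has closed range
  have ha : z + α ≠ 0 := fun h0 => hz (by linear_combination h0)
  have hclosedT : IsClosed (Set.range fun y : Y => (z + α) • y - Lz y) :=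
    isClosed_range_smul_id_sub Lz hcompact ha
  -- the continuous map  c ψ = ψ(0) + L(Gψ)
  have hGlip : LipschitzWith ⟨E * (E * h), by positivity⟩ G := by
    apply LipschitzWith.of_dist_le_mul
    intro ψ₁ ψ₂
    apply (ContinuousMap.dist_le (by exact mul_nonneg (NNReal.coe_nonneg _) dist_nonneg)).2
    intro t
    have hint : ∀ ψ : X, IntervalIntegrable
        (fun s : ℝ => Complex.exp (-z * s) • ψ (pr s)) MeasureTheory.volume (t:ℝ) 0 :=
      fun ψ => (contf ψ).intervalIntegrable _ _
    have hPsub : P ψ₁ (t:ℝ) - P ψ₂ (t:ℝ) =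
        ∫ s in (t:ℝ)..(0:ℝ), (Complex.exp (-z * s) • ψ₁ (pr s)
          - Complex.exp (-z * s) • ψ₂ (pr s)) :=
      (intervalIntegral.integral_sub (hint ψ₁) (hint ψ₂)).symm
    have hbnd : ‖P ψ₁ (t:ℝ) - P ψ₂ (t:ℝ)‖ ≤ (E * dist ψ₁ ψ₂) * h := by
      rw [hPsub]
      have : ∀ x ∈ Set.uIoc (t:ℝ) (0:ℝ),
          ‖Complex.exp (-z * x) • ψ₁ (pr x) - Complex.exp (-z * x) • ψ₂ (pr x)‖
            ≤ E * dist ψ₁ ψ₂ := by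
        intro x hx
        rw [Set.uIoc_of_le t.2.2] at hx
        have hxmem : x ∈ Set.Icc (-h) (0:ℝ) := ⟨le_trans t.2.1 hx.1.le, hx.2⟩
        rw [← smul_sub, norm_smul]
        have h1 : ‖Complex.exp (-z * x)‖ ≤ E := by
          have := aux_exp_bound (-z) hh.le hxmem
          rwa [norm_neg] at this
        have h2 : ‖ψ₁ (pr x) - ψ₂ (pr x)‖ ≤ dist ψ₁ ψ₂ := by
          rw [← dist_eq_norm]
          exact ContinuousMap.dist_apply_le_dist _
        exact mul_le_mul h1 h2 (norm_nonneg _) hEpos.le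
      refine (intervalIntegral.norm_integral_le_of_norm_le_const this).trans ?_
      have habs : |(0:ℝ) - (t:ℝ)| ≤ h := by
        rw [abs_le]
        refine ⟨by linarith [t.2.2], by linarith [t.2.1]⟩
      exact mul_le_mul_of_nonneg_left habs (by positivity)
    show dist (Complex.exp (z * ((t:ℝ):ℂ)) • P ψ₁ (t:ℝ))
        (Complex.exp (z * ((t:ℝ):ℂ)) • P ψ₂ (t:ℝ)) ≤ E * (E * h) * dist ψ₁ ψ₂
    rw [dist_eq_norm, ← smul_sub, norm_smul]
    have hfin : ‖Complex.exp (z * ((t:ℝ):ℂ))‖ * ‖P ψ₁ (t:ℝ) - P ψ₂ (t:ℝ)‖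
        ≤ E * ((E * dist ψ₁ ψ₂) * h) :=
      mul_le_mul (aux_exp_bound z hh.le t.2) hbnd (norm_nonneg _)
        (by positivity)
    calc ‖Complex.exp (z * ((t:ℝ):ℂ))‖ * ‖P ψ₁ (t:ℝ) - P ψ₂ (t:ℝ)‖
        ≤ E * ((E * dist ψ₁ ψ₂) * h) := hfin
      _ = E * (E * h) * dist ψ₁ ψ₂ := by ring
  set c : X → Y := fun ψ => ψ ⟨0, h0mem⟩ + L (G ψ) with hcdef
  have hccont : Continuous c :=
    (continuous_eval_const _).add (L.continuous.comp hGlip.continuous)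
  -- the set equals the preimage of the closed range under c
  have hkey : {ψ : X |
      ∃ φ φ' : X,
        (∀ t : Set.Icc (-h) (0 : ℝ),
          HasDerivWithinAt (fun s : ℝ => φ (pr s))
            (φ' t) (Set.Icc (-h) 0) (t : ℝ)) ∧
        φ' ⟨0, by constructor <;> linarith⟩ =
          (-α) • φ ⟨0, by constructor <;> linarith⟩ + L φ ∧
        ψ = z • φ - φ'}
      = c ⁻¹' (Set.range fun y : Y => (z + α) • y - Lz y) := by
    ext ψ
    simp only [Set.mem_setOf_eq, Set.mem_preimage, Set.mem_range]
    constructor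
    · rintro ⟨φ, φ', hder, hbc, hψ⟩
      set y : Y := φ ⟨0, h0mem⟩ with hy
      refine ⟨y, ?_⟩
      -- step 1: decomposition φ(t) = e^{zt}y + e^{zt}P ψ t
      have hψap : ∀ t : Set.Icc (-h) (0:ℝ), ψ t = z • φ t - φ' t := by
        intro t; rw [hψ]; rfl
      have hu : ∀ x ∈ Set.Icc (-h) (0:ℝ),
          HasDerivWithinAt
            (fun θ : ℝ => Complex.exp (-z * θ) • φ (pr θ) - P ψ θ)
            0 (Set.Icc (-h) 0) x := by
        intro x hx
        have hd1 : HasDerivWithinAt (fun θ : ℝ => Complex.exp (-z * θ) • φ (pr θ))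
            (Complex.exp (-z * x) • φ' ⟨x, hx⟩
              + (-z * Complex.exp (-z * x)) • φ (pr x)) (Set.Icc (-h) 0) x := by
          have he := (aux_hasDerivAt_exp (-z) x).hasDerivWithinAt
            (s := Set.Icc (-h) 0)
          have hf := hder ⟨x, hx⟩
          exact he.smul hf
        have hd2 : HasDerivWithinAt (P ψ)
            (-(Complex.exp (-z * x) • ψ (pr x))) (Set.Icc (-h) 0) x :=
          (aux_hasDerivAt_primitive (contf ψ) x).hasDerivWithinAt
        have := hd1.sub hd2
        have hprx : pr x = ⟨x, hx⟩ := Set.projIcc_of_mem hI hx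
        have hzero : Complex.exp (-z * x) • φ' ⟨x, hx⟩
              + (-z * Complex.exp (-z * x)) • φ (pr x)
              - -(Complex.exp (-z * x) • ψ (pr x)) = 0 := by
          rw [hprx, hψap ⟨x, hx⟩, mul_smul]
          module
        rwa [hzero] at this
      have huconst : ∀ t : Set.Icc (-h) (0:ℝ),
          Complex.exp (-z * (t:ℝ)) • φ t - P ψ (t:ℝ) = y := by
        intro t
        have h0 := Convex.norm_image_sub_le_of_norm_hasDerivWithin_le (C := 0)
          (fun x hx => hu x hx) (fun x _ => by simp) (convex_Icc _ _) h0mem t.2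
        have : (fun θ : ℝ => Complex.exp (-z * θ) • φ (pr θ) - P ψ θ) (t:ℝ)
            = (fun θ : ℝ => Complex.exp (-z * θ) • φ (pr θ) - P ψ θ) 0 := by
          have := h0
          rw [mul_comm] at this
          have h1 : ‖(fun θ : ℝ => Complex.exp (-z * θ) • φ (pr θ) - P ψ θ) (t:ℝ)
              - (fun θ : ℝ => Complex.exp (-z * θ) • φ (pr θ) - P ψ θ) 0‖ ≤ 0 := by
            simpa using h0
          have := norm_le_zero_iff.1 h1
          exact sub_eq_zero.1 this
        simp only at this
        have hprt : pr (t:ℝ) = t := Set.projIcc_val hI t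
        rw [hprt] at this
        rw [this]
        show Complex.exp (-z * (0:ℝ)) • φ (pr 0) - P ψ 0 = y
        have hpr0 : pr 0 = ⟨0, h0mem⟩ := Set.projIcc_of_mem hI h0mem
        rw [hpr0]
        simp only [Complex.ofReal_zero, mul_zero, Complex.exp_zero, one_smul]
        have : P ψ 0 = 0 := intervalIntegral.integral_same
        rw [this, sub_zero]
      have hdecomp : ∀ t : Set.Icc (-h) (0:ℝ),
          φ t = Complex.exp (z * ((t:ℝ):ℂ)) • y + Complex.exp (z * ((t:ℝ):ℂ)) • P ψ (t:ℝ) := by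
        intro t
        have h1 := huconst t
        have h2 : Complex.exp (z * ((t:ℝ):ℂ)) • (Complex.exp (-z * (t:ℝ)) • φ t) = φ t := by
          rw [smul_smul, ← Complex.exp_add]
          have : z * ((t:ℝ):ℂ) + -z * ((t:ℝ):ℂ) = 0 := by ring
          rw [this, Complex.exp_zero, one_smul]
        have h3 : Complex.exp (-z * (t:ℝ)) • φ t = y + P ψ (t:ℝ) := by
          rw [← h1]; abel
        calc φ t = Complex.exp (z * ((t:ℝ):ℂ)) • (Complex.exp (-z * (t:ℝ)) • φ t) := h2.symm
          _ = Complex.exp (z * ((t:ℝ):ℂ)) • (y + P ψ (t:ℝ)) := by rw [h3]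
          _ = _ := by rw [smul_add]
      -- step 2: φ = expTensor y + G ψ
      have hφeq : φ = expTensor h z y + G ψ := by
        ext t
        rw [hdecomp t]
        rfl
      -- step 3: compute
      have hψ0 : ψ ⟨0, h0mem⟩ = z • y - φ' ⟨0, h0mem⟩ := hψap _
      have hLφ : L φ = Lz y + L (G ψ) := by
        rw [hφeq, map_add, hLz_apply]
      show (z + α) • y - Lz y = c ψ
      rw [hcdef]
      simp only
      rw [hψ0, hbc, hLφ]
      module
    · rintro ⟨v, hv⟩
      -- build the solution
      set φ : X := expTensor h z v + G ψ with hφdef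
      set φ' : X := z • φ - ψ with hφ'def
      have hφap : ∀ t : Set.Icc (-h) (0:ℝ),
          φ t = Complex.exp (z * ((t:ℝ):ℂ)) • v + Complex.exp (z * ((t:ℝ):ℂ)) • P ψ (t:ℝ) :=
        fun t => rfl
      have hφ'ap : ∀ t : Set.Icc (-h) (0:ℝ), φ' t = z • φ t - ψ t := fun t => rfl
      refine ⟨φ, φ', ?_, ?_, ?_⟩
      · intro t
        -- global derivative
        have hΦ : HasDerivAt
            (fun θ : ℝ => Complex.exp (z * θ) • v + Complex.exp (z * θ) • P ψ θ)
            (z • φ t - ψ t) (t:ℝ) := by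
          have hd1 : HasDerivAt (fun θ : ℝ => Complex.exp (z * θ) • v)
              ((z * Complex.exp (z * (t:ℝ))) • v) (t:ℝ) := by
            have := (aux_hasDerivAt_exp z (t:ℝ)).smul_const v
            simpa using this
          have hd2 : HasDerivAt (fun θ : ℝ => Complex.exp (z * θ) • P ψ θ)
              (Complex.exp (z * (t:ℝ)) • (-(Complex.exp (-z * (t:ℝ)) • ψ (pr (t:ℝ))))
                + (z * Complex.exp (z * (t:ℝ))) • P ψ (t:ℝ)) (t:ℝ) :=
            (aux_hasDerivAt_exp z (t:ℝ)).smul (aux_hasDerivAt_primitive (contf ψ) (t:ℝ))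
          have hsum := hd1.add hd2
          have heq : (z * Complex.exp (z * (t:ℝ))) • v
              + (Complex.exp (z * (t:ℝ)) • (-(Complex.exp (-z * (t:ℝ)) • ψ (pr (t:ℝ))))
                + (z * Complex.exp (z * (t:ℝ))) • P ψ (t:ℝ))
              = z • φ t - ψ t := by
            have hprt : pr (t:ℝ) = t := Set.projIcc_val hI t
            have hee : Complex.exp (z * ((t:ℝ):ℂ)) • (Complex.exp (-z * (t:ℝ)) • ψ t)
                = ψ t := by
              rw [smul_smul, ← Complex.exp_add]
              have : z * ((t:ℝ):ℂ) + -z * ((t:ℝ):ℂ) = 0 := by ring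
              rw [this, Complex.exp_zero, one_smul]
            rw [hprt, hφap t, smul_neg, hee, mul_smul, mul_smul]
            module
          rwa [heq] at hsum
        have hwithin := hΦ.hasDerivWithinAt (s := Set.Icc (-h) 0)
        apply hwithin.congr
        · intro s hs
          have : pr s = ⟨s, hs⟩ := Set.projIcc_of_mem hI hs
          show φ (pr s) = _
          rw [this, hφap ⟨s, hs⟩]
        · have : pr (t:ℝ) = t := Set.projIcc_val hI t
          show φ (pr (t:ℝ)) = _
          rw [this, hφap t]
      · -- boundary condition
        have hφ0 : φ ⟨0, h0mem⟩ = v := by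
          rw [hφap ⟨0, h0mem⟩]
          show Complex.exp (z * ((0:ℝ):ℂ)) • v + Complex.exp (z * ((0:ℝ):ℂ)) • P ψ 0 = v
          have : P ψ 0 = 0 := intervalIntegral.integral_same
          rw [this]
          simp
        have hLφ : L φ = Lz v + L (G ψ) := by
          rw [hφdef, map_add, hLz_apply]
        have hψ0 : ψ ⟨0, h0mem⟩ = ((z + α) • v - Lz v) - L (G ψ) := by
          rw [eq_sub_iff_add_eq]
          exact hv.symm
        rw [hφ'ap ⟨0, h0mem⟩, hφ0, hψ0, hLφ]
        module
      · rw [hφ'def]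
        abel
  rw [hkey]
  exact hclosedT.preimage hccont
end

section
/- Let λ ∈ ℂ and let q : [−1,1] → ℂ be twice continuously differentiable. Define F(x) := (λ+α)e^{λτ₀} q(x) − Σ_{i=1}^N c_i (K_i q)(x), where (K_i q)(x) := ∫_{−1}^{1} e^{−k_i(λ)|x−r|} q(r) dr (so that F = e^{λτ₀}·Δ(λ)q). Then F is twice continuously differentiable on [−1,1] and F″(x) = (λ+α)e^{λτ₀} q″(x) + 2(Σ_{i=1}^N c_i k_i(λ)) q(x) − Σ_{i=1}^N c_i k_i(λ)² (K_i q)(x) for all x ∈ [−1,1]. -/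
open Set

/-- The integral operator `(K_i q)(x) = ∫_{−1}^{1} e^{−k_i|x−r|} q(r) dr` with
`k_i = λ + μ_i`. -/
noncomputable def Kop (k : ℂ) (q : ℝ → ℂ) (x : ℝ) : ℂ :=
  ∫ r in (-1 : ℝ)..1, Complex.exp (-k * ((|x - r| : ℝ) : ℂ)) * q r

/-- `F = e^{λτ₀}·Δ(λ)q`, i.e. `F(x) = (λ+α)e^{λτ₀} q(x) − Σᵢ cᵢ (K_i q)(x)`. -/
noncomputable def Fop {N : ℕ} (c μ : Fin N → ℂ) (τ0 : ℝ) (α lam : ℂ)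
    (q : ℝ → ℂ) (x : ℝ) : ℂ :=
  (lam + α) * Complex.exp (lam * (τ0 : ℂ)) * q x - ∑ i, c i * Kop (lam + μ i) q x

noncomputable def Afun (k : ℂ) (Q : ℝ → ℂ) (x : ℝ) : ℂ :=
  ∫ r in (-1 : ℝ)..x, Complex.exp (k * r) * Q r
noncomputable def Bfun (k : ℂ) (Q : ℝ → ℂ) (x : ℝ) : ℂ :=
  ∫ r in x..(1 : ℝ), Complex.exp (-k * r) * Q r
noncomputable def Gfun (k : ℂ) (Q : ℝ → ℂ) (x : ℝ) : ℂ :=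
  Complex.exp (-k * x) * Afun k Q x
noncomputable def Hfun (k : ℂ) (Q : ℝ → ℂ) (x : ℝ) : ℂ :=
  Complex.exp (k * x) * Bfun k Q x

lemma contA (k : ℂ) {Q : ℝ → ℂ} (hQ : Continuous Q) :
    Continuous (fun r : ℝ => Complex.exp (k * r) * Q r) :=
  (Complex.continuous_exp.comp (continuous_const.mul Complex.continuous_ofReal)).mul hQ

lemma hasDerivAt_Afun (k : ℂ) {Q : ℝ → ℂ} (hQ : Continuous Q) (x : ℝ) :
    HasDerivAt (Afun k Q) (Complex.exp (k * x) * Q x) x :=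
  intervalIntegral.integral_hasDerivAt_right ((contA k hQ).intervalIntegrable _ _)
    ((contA k hQ).stronglyMeasurable.stronglyMeasurableAtFilter)
    (contA k hQ).continuousAt

lemma hasDerivAt_Bfun (k : ℂ) {Q : ℝ → ℂ} (hQ : Continuous Q) (x : ℝ) :
    HasDerivAt (Bfun k Q) (-(Complex.exp (-k * x) * Q x)) x :=
  intervalIntegral.integral_hasDerivAt_left ((contA (-k) hQ).intervalIntegrable _ _)
    ((contA (-k) hQ).stronglyMeasurable.stronglyMeasurableAtFilter)
    (contA (-k) hQ).continuousAt

lemma hasDerivAt_Gfun (k : ℂ) {Q : ℝ → ℂ} (hQ : Continuous Q) (x : ℝ) :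
    HasDerivAt (Gfun k Q) (-k * Gfun k Q x + Q x) x := by
  have h1 : HasDerivAt (fun y : ℝ => Complex.exp (-k * y)) (Complex.exp (-k * x) * -k) x := by
    simpa using (((hasDerivAt_id x).ofReal_comp.const_mul (-k)).cexp)
  have := h1.mul (hasDerivAt_Afun k hQ x)
  convert this using 1
  · rfl
  · rfl
  simp only [Gfun]
  rw [show Complex.exp (-k*x) * (Complex.exp (k*x) * Q x)
      = Complex.exp (-k*x + k*x) * Q x by rw [Complex.exp_add]; ring]
  ring_nf
  simp [Complex.exp_zero]

lemma hasDerivAt_Hfun (k : ℂ) {Q : ℝ → ℂ} (hQ : Continuous Q) (x : ℝ) :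
    HasDerivAt (Hfun k Q) (k * Hfun k Q x - Q x) x := by
  have h1 : HasDerivAt (fun y : ℝ => Complex.exp (k * y)) (Complex.exp (k * x) * k) x := by
    simpa using (((hasDerivAt_id x).ofReal_comp.const_mul k).cexp)
  have := h1.mul (hasDerivAt_Bfun k hQ x)
  convert this using 1
  · rfl
  · rfl
  simp only [Hfun]
  rw [show Complex.exp (k*x) * -(Complex.exp (-k*x) * Q x)
      = -(Complex.exp (k*x + -k*x) * Q x) by rw [Complex.exp_add]; ring]
  ring_nf
  simp [Complex.exp_zero]

lemma continuous_Gfun (k : ℂ) {Q : ℝ → ℂ} (hQ : Continuous Q) : Continuous (Gfun k Q) :=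
  continuous_iff_continuousAt.mpr fun x => (hasDerivAt_Gfun k hQ x).continuousAt

lemma continuous_Hfun (k : ℂ) {Q : ℝ → ℂ} (hQ : Continuous Q) : Continuous (Hfun k Q) :=
  continuous_iff_continuousAt.mpr fun x => (hasDerivAt_Hfun k hQ x).continuousAt

lemma Kop_congr (k : ℂ) {q Q : ℝ → ℂ} (h : ∀ r ∈ Icc (-1:ℝ) 1, q r = Q r) (x : ℝ) :
    Kop k q x = Kop k Q x := by
  apply intervalIntegral.integral_congr
  intro r hr
  rw [Set.uIcc_of_le (by norm_num : (-1:ℝ) ≤ 1)] at hr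
  simp [h r hr]

lemma Kop_split (k : ℂ) {Q : ℝ → ℂ} (hQ : Continuous Q) {x : ℝ}
    (hx : x ∈ Icc (-1:ℝ) 1) : Kop k Q x = Gfun k Q x + Hfun k Q x := by
  have hcont : Continuous (fun r : ℝ => Complex.exp (-k * ((|x - r| : ℝ) : ℂ)) * Q r) := by
    exact (Complex.continuous_exp.comp (continuous_const.mul
      (Complex.continuous_ofReal.comp ((continuous_const.sub continuous_id).abs)))).mul hQ
  have h1 : IntervalIntegrable _ MeasureTheory.volume (-1) x := hcont.intervalIntegrable (-1) x
  have h2 : IntervalIntegrable _ MeasureTheory.volume x 1 := hcont.intervalIntegrable x 1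
  rw [Kop, ← intervalIntegral.integral_add_adjacent_intervals h1 h2]
  congr 1
  · rw [Gfun, Afun, ← intervalIntegral.integral_const_mul]
    apply intervalIntegral.integral_congr
    intro r hr
    rw [Set.uIcc_of_le hx.1] at hr
    dsimp only
    have habs : |x - r| = x - r := abs_of_nonneg (by linarith [hr.2])
    rw [habs, ← mul_assoc, ← Complex.exp_add]
    push_cast
    ring_nf
  · rw [Hfun, Bfun, ← intervalIntegral.integral_const_mul]
    apply intervalIntegral.integral_congr
    intro r hr
    rw [Set.uIcc_of_le hx.2] at hr
    dsimp only
    have habs : |x - r| = r - x := by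
      rw [abs_sub_comm]; exact abs_of_nonneg (by linarith [hr.1])
    rw [habs, ← mul_assoc, ← Complex.exp_add]
    push_cast
    ring_nf

/-- If `q` is twice continuously differentiable on `[−1,1]`, then
`F(x) = (λ+α)e^{λτ₀} q(x) − Σᵢ cᵢ (K_i q)(x)` is twice continuously differentiable and
`F″(x) = (λ+α)e^{λτ₀} q″(x) + 2(Σᵢ cᵢ kᵢ) q(x) − Σᵢ cᵢ kᵢ² (K_i q)(x)` on `[−1,1]`. -/
theorem stmt8 (N : ℕ) (hN : 1 ≤ N) (τ0 : ℝ) (hτ0 : 0 ≤ τ0) (α : ℂ)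
    (c μ : Fin N → ℂ) (hc : ∀ i, c i ≠ 0) (hμ : Function.Injective μ)
    (lam : ℂ) (q q' q'' : ℝ → ℂ)
    (hq1 : ∀ x ∈ Icc (-1 : ℝ) 1, HasDerivWithinAt q (q' x) (Icc (-1) 1) x)
    (hq2 : ∀ x ∈ Icc (-1 : ℝ) 1, HasDerivWithinAt q' (q'' x) (Icc (-1) 1) x)
    (hq3 : ContinuousOn q'' (Icc (-1) 1)) :
    ∃ F' F'' : ℝ → ℂ,
      (∀ x ∈ Icc (-1 : ℝ) 1,
        HasDerivWithinAt (Fop c μ τ0 α lam q) (F' x) (Icc (-1) 1) x) ∧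
      (∀ x ∈ Icc (-1 : ℝ) 1, HasDerivWithinAt F' (F'' x) (Icc (-1) 1) x) ∧
      ContinuousOn F'' (Icc (-1) 1) ∧
      ∀ x ∈ Icc (-1 : ℝ) 1,
        F'' x = (lam + α) * Complex.exp (lam * (τ0 : ℂ)) * q'' x
          + 2 * (∑ i, c i * (lam + μ i)) * q x
          - ∑ i, c i * (lam + μ i) ^ 2 * Kop (lam + μ i) q x := by
  have h11 : (-1 : ℝ) ≤ 1 := by norm_num
  have hqc : ContinuousOn q (Icc (-1:ℝ) 1) := fun x hx => (hq1 x hx).continuousWithinAt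
  set Q : ℝ → ℂ := IccExtend h11 ((Icc (-1:ℝ) 1).restrict q) with hQdef
  have hQ : Continuous Q :=
    continuous_IccExtend_iff.mpr (continuousOn_iff_continuous_restrict.mp hqc)
  have hQq : ∀ r ∈ Icc (-1:ℝ) 1, q r = Q r := by
    intro r hr
    rw [hQdef, IccExtend_of_mem h11 _ hr]
    rfl
  set E : ℂ := (lam + α) * Complex.exp (lam * (τ0 : ℂ)) with hE
  -- first derivative data
  have hGH : ∀ (i : Fin N) (x : ℝ),
      HasDerivAt (fun y => Gfun (lam + μ i) Q y + Hfun (lam + μ i) Q y)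
        ((lam + μ i) * (Hfun (lam + μ i) Q x - Gfun (lam + μ i) Q x)) x := by
    intro i x
    have := (hasDerivAt_Gfun (lam + μ i) hQ x).add (hasDerivAt_Hfun (lam + μ i) hQ x)
    convert this using 1
    · rfl
    · rfl
    ring
  have hGH2 : ∀ (i : Fin N) (x : ℝ),
      HasDerivAt (fun y => (lam + μ i) * (Hfun (lam + μ i) Q y - Gfun (lam + μ i) Q y))
        ((lam + μ i) ^ 2 * (Gfun (lam + μ i) Q x + Hfun (lam + μ i) Q x)
          - 2 * (lam + μ i) * Q x) x := by
    intro i x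
    have := ((hasDerivAt_Hfun (lam + μ i) hQ x).sub
      (hasDerivAt_Gfun (lam + μ i) hQ x)).const_mul (lam + μ i)
    convert this using 1
    · rfl
    · rfl
    ring
  refine ⟨fun x => E * q' x - ∑ i, c i *
      ((lam + μ i) * (Hfun (lam + μ i) Q x - Gfun (lam + μ i) Q x)),
    fun x => E * q'' x - ∑ i, c i *
      ((lam + μ i) ^ 2 * (Gfun (lam + μ i) Q x + Hfun (lam + μ i) Q x)
        - 2 * (lam + μ i) * Q x), ?_, ?_, ?_, ?_⟩
  · intro x hx
    have hEq : ∀ y ∈ Icc (-1:ℝ) 1, Fop c μ τ0 α lam q y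
        = E * q y - ∑ i, c i * (Gfun (lam + μ i) Q y + Hfun (lam + μ i) Q y) := by
      intro y hy
      simp only [Fop, hE]
      congr 1
      exact Finset.sum_congr rfl fun i _ => by
        rw [Kop_congr (lam + μ i) hQq y, Kop_split (lam + μ i) hQ hy]
    have hd : HasDerivWithinAt
        (fun y => E * q y - ∑ i, c i * (Gfun (lam + μ i) Q y + Hfun (lam + μ i) Q y))
        (E * q' x - ∑ i, c i *
          ((lam + μ i) * (Hfun (lam + μ i) Q x - Gfun (lam + μ i) Q x)))
        (Icc (-1:ℝ) 1) x := by
      exact ((hq1 x hx).const_mul E).sub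
        ((HasDerivAt.fun_sum fun i _ => (hGH i x).const_mul (c i)).hasDerivWithinAt)
    exact hd.congr hEq (hEq x hx)
  · intro x hx
    exact ((hq2 x hx).const_mul E).sub
      ((HasDerivAt.fun_sum fun i _ => (hGH2 i x).const_mul (c i)).hasDerivWithinAt)
  · apply ContinuousOn.sub (continuousOn_const.mul hq3)
    apply continuousOn_finset_sum
    intro i _
    exact (continuous_const.mul ((continuous_const.mul
      ((continuous_Gfun _ hQ).add (continuous_Hfun _ hQ))).sub
      ((continuous_const.mul hQ)))).continuousOn
  · intro x hx
    have hK : ∀ i : Fin N, Kop (lam + μ i) q x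
        = Gfun (lam + μ i) Q x + Hfun (lam + μ i) Q x :=
      fun i => (Kop_congr (lam + μ i) hQq x).trans (Kop_split (lam + μ i) hQ hx)
    have hterm : ∀ i : Fin N, c i *
        ((lam + μ i) ^ 2 * (Gfun (lam + μ i) Q x + Hfun (lam + μ i) Q x)
          - 2 * (lam + μ i) * Q x)
        = c i * (lam + μ i) ^ 2 * Kop (lam + μ i) q x - 2 * (c i * (lam + μ i)) * q x := by
      intro i
      rw [hK i, hQq x hx]
      ring
    dsimp only
    rw [Finset.sum_congr rfl fun i _ => hterm i, Finset.sum_sub_distrib,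
      ← Finset.sum_mul, ← Finset.mul_sum]
    ring
end

section
/- Let λ ∈ ℂ with λ ∉ 𝒮 and λ ≠ −α, suppose the polynomial 𝒫(ρ) := (e^{λτ₀}(λ+α)/2) ∏_{j=1}^{N}(ρ² − k_j(λ)²) + Σ_{i=1}^{N} c_i k_i(λ) ∏_{j≠i}(ρ² − k_j(λ)²) has 2N pairwise distinct roots ±ρ₁,…,±ρ_N, and suppose k_j(λ) ≠ ±ρ_i for all i,j ∈ {1,…,N}. Given Γ = (γ₁,…,γ_N,γ_{−1},…,γ_{−N}) ∈ ℂ^{2N}, define q_Γ(x) := Σ_{i=1}^{N} [ γ_i e^{ρ_i x} + γ_{−i} e^{−ρ_i x} ]. Then Δ(λ)q_Γ = 0 on [−1,1] if and only if S(λ)Γ = 0, where S(λ) is the 2N×2N block matrix S(λ) = [[S⁻, S⁺],[S⁺, S⁻]] with (S⁻)_{j,i} = e^{ρ_i}/(k_j(λ) − ρ_i) and (S⁺)_{j,i} = e^{−ρ_i}/(k_j(λ) + ρ_i). -/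
set_option maxHeartbeats 1000000


open Set

/-- The connectivity kernel `J₀(x,r) = Σᵢ cᵢ e^{−μᵢ|x−r|}`. -/
noncomputable def kerJ0 {N : ℕ} (c μ : Fin N → ℂ) (x r : ℝ) : ℂ :=
  ∑ i, c i * Complex.exp (-μ i * ((|x - r| : ℝ) : ℂ))

/-- The operator `Δ(λ)` acting on functions on `[-1,1]`. -/
noncomputable def DeltaOp {N : ℕ} (c μ : Fin N → ℂ) (τ0 : ℝ) (α lam : ℂ)
    (q : ℝ → ℂ) (x : ℝ) : ℂ :=
  (lam + α) * q x -
    ∫ r in (-1 : ℝ)..1,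
      kerJ0 c μ x r * Complex.exp (-lam * (τ0 : ℂ)) *
        Complex.exp (-lam * ((|x - r| : ℝ) : ℂ)) * q r

/-- The exceptional set `𝒮 = { λ : (λ+μᵢ)² = (λ+μⱼ)² for some i ≠ j }`. -/
def badSet {N : ℕ} (μ : Fin N → ℂ) : Set ℂ :=
  {lam : ℂ | ∃ i j : Fin N, i ≠ j ∧ (lam + μ i) ^ 2 = (lam + μ j) ^ 2}

/-- The characteristic polynomial
`𝒫(ρ) = (e^{λτ₀}(λ+α)/2)·∏ⱼ(ρ²−kⱼ²) + Σᵢ cᵢ kᵢ ∏_{j≠i}(ρ²−kⱼ²)`, `kᵢ = λ+μᵢ`. -/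
noncomputable def charP {N : ℕ} (c μ : Fin N → ℂ) (τ0 : ℝ) (α lam ρ : ℂ) : ℂ :=
  Complex.exp (lam * (τ0 : ℂ)) * (lam + α) / 2 * ∏ j, (ρ ^ 2 - (lam + μ j) ^ 2)
    + ∑ i, c i * (lam + μ i) * ∏ j ∈ Finset.univ.erase i, (ρ ^ 2 - (lam + μ j) ^ 2)

/-- The `2N×2N` block matrix `S(λ) = [[S⁻,S⁺],[S⁺,S⁻]]` with
`(S⁻)_{j,i} = e^{ρᵢ}/(kⱼ−ρᵢ)`, `(S⁺)_{j,i} = e^{−ρᵢ}/(kⱼ+ρᵢ)`. -/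
noncomputable def Smat {N : ℕ} (μ : Fin N → ℂ) (lam : ℂ) (ρ : Fin N → ℂ) :
    Matrix (Fin N ⊕ Fin N) (Fin N ⊕ Fin N) ℂ :=
  Matrix.fromBlocks
    (Matrix.of fun j i => Complex.exp (ρ i) / (lam + μ j - ρ i))
    (Matrix.of fun j i => Complex.exp (-ρ i) / (lam + μ j + ρ i))
    (Matrix.of fun j i => Complex.exp (-ρ i) / (lam + μ j + ρ i))
    (Matrix.of fun j i => Complex.exp (ρ i) / (lam + μ j - ρ i))

/-- The function `q_Γ(x) = Σᵢ (γᵢ e^{ρᵢx} + γ₋ᵢ e^{−ρᵢx})`. -/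
noncomputable def qGamma {N : ℕ} (ρ : Fin N → ℂ) (Γ : Fin N ⊕ Fin N → ℂ) (x : ℝ) : ℂ :=
  ∑ i, (Γ (Sum.inl i) * Complex.exp (ρ i * (x : ℂ)) +
    Γ (Sum.inr i) * Complex.exp (-ρ i * (x : ℂ)))

lemma iterZeroFun : ∀ m : ℕ, iteratedDeriv m (fun _ : ℝ => (0:ℂ)) = fun _ => 0 := by
  intro m
  induction m with
  | zero => simp [iteratedDeriv_zero]
  | succ k ih => rw [iteratedDeriv_succ, ih]; funext y; simp

lemma expIndep {ι : Type*} [Fintype ι] (κ : ι → ℂ) (hκ : Function.Injective κ) (a : ι → ℂ)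
    (h : ∀ x ∈ Icc (-1:ℝ) 1, (∑ i, a i * Complex.exp (κ i * x)) = 0) : a = 0 := by
  set f : ℝ → ℂ := fun x => ∑ i, a i * Complex.exp (κ i * x) with hf
  have hiter : ∀ (m : ℕ), iteratedDeriv m f = fun x : ℝ =>
      ∑ i, a i * κ i ^ m * Complex.exp (κ i * x) := by
    intro m
    induction m with
    | zero => funext x; simp [f]
    | succ m ih =>
      funext x
      rw [iteratedDeriv_succ, ih]
      have hD : ∀ i ∈ Finset.univ, HasDerivAt
          (fun x : ℝ => a i * κ i ^ m * Complex.exp (κ i * x))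
          (a i * κ i ^ (m+1) * Complex.exp (κ i * (x:ℂ))) x := by
        intro i _
        have h1 : HasDerivAt (fun y : ℂ => Complex.exp (κ i * y))
            (Complex.exp (κ i * (x:ℂ)) * κ i) (x:ℂ) :=
          (Complex.hasDerivAt_exp (κ i * x)).comp _
            (by simpa using (hasDerivAt_id ((x:ℝ):ℂ)).const_mul (κ i))
        have h2 := (h1.comp_ofReal).const_mul (a i * κ i ^ m)
        convert h2 using 1
        · rfl
        · ring
      exact (HasDerivAt.fun_sum hD).deriv
  have hev : f =ᶠ[nhds (0:ℝ)] (fun _ => (0:ℂ)) := by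
    filter_upwards [Ioo_mem_nhds (by norm_num : (-1:ℝ) < 0) (by norm_num : (0:ℝ) < 1)] with x hx
    exact h x ⟨le_of_lt hx.1, le_of_lt hx.2⟩
  have hzero : ∀ m : ℕ, (∑ i, a i * κ i ^ m) = 0 := by
    intro m
    have := hev.iteratedDeriv_eq m
    rw [hiter m] at this
    rw [iterZeroFun m] at this
    simpa using this
  -- transport to Fin (card ι) and use Vandermonde
  have e := (Fintype.equivFin ι).symm
  have key : (a ∘ e) = 0 := by
    apply Matrix.eq_zero_of_forall_pow_sum_mul_pow_eq_zero (f := κ ∘ e)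
      (hκ.comp e.injective)
    intro i
    have := hzero (i : ℕ)
    rw [← Equiv.sum_comp e (fun j => a j * κ j ^ (i:ℕ))] at this
    exact this
  funext j
  have := congrFun key (e.symm j)
  simpa using this


lemma contInt (k r0 : ℂ) (x a b : ℝ) :
    IntervalIntegrable (fun r : ℝ => Complex.exp (-k * ((|x - r| : ℝ) : ℂ)) * Complex.exp (r0 * r))
      MeasureTheory.volume a b := by
  apply Continuous.intervalIntegrable
  fun_prop

lemma exp_integral (k r0 : ℂ) (hk1 : k + r0 ≠ 0) (hk2 : k - r0 ≠ 0) {x : ℝ}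
    (hx : x ∈ Icc (-1:ℝ) 1) :
    (∫ r in (-1:ℝ)..1, Complex.exp (-k * ((|x - r| : ℝ) : ℂ)) * Complex.exp (r0 * r)) =
      2*k/(k^2 - r0^2) * Complex.exp (r0 * x)
      - Complex.exp (-r0) / (k + r0) * Complex.exp (-k * (1+x))
      - Complex.exp r0 / (k - r0) * Complex.exp (-k * (1-x)) := by
  obtain ⟨hx1, hx2⟩ := hx
  have hsplit := intervalIntegral.integral_add_adjacent_intervals
    (contInt k r0 x (-1) x) (contInt k r0 x x 1)
  rw [← hsplit]
  have h1 : (∫ r in (-1:ℝ)..x, Complex.exp (-k * ((|x - r| : ℝ) : ℂ)) * Complex.exp (r0 * r))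
      = Complex.exp (-k * x) * ((Complex.exp ((k+r0) * x) - Complex.exp ((k+r0) * (-1:ℝ))) / (k+r0)) := by
    have hcg : (∫ r in (-1:ℝ)..x, Complex.exp (-k * ((|x - r| : ℝ) : ℂ)) * Complex.exp (r0 * r))
        = ∫ r in (-1:ℝ)..x, Complex.exp (-k * (x:ℂ)) * Complex.exp ((k+r0) * r) := by
      apply intervalIntegral.integral_congr
      intro r hr
      rw [uIcc_of_le hx1] at hr
      have habs : |x - r| = x - r := abs_of_nonneg (by linarith [hr.2])
      simp only [habs, ← Complex.exp_add]
      push_cast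
      ring_nf
    rw [hcg, intervalIntegral.integral_const_mul, integral_exp_mul_complex hk1]
  have h2 : (∫ r in x..(1:ℝ), Complex.exp (-k * ((|x - r| : ℝ) : ℂ)) * Complex.exp (r0 * r))
      = Complex.exp (k * x) * ((Complex.exp ((r0-k) * (1:ℝ)) - Complex.exp ((r0-k) * x)) / (r0-k)) := by
    have hk2' : r0 - k ≠ 0 := by
      intro h
      exact hk2 (by rw [← neg_eq_zero, neg_sub]; exact h)
    have hcg : (∫ r in x..(1:ℝ), Complex.exp (-k * ((|x - r| : ℝ) : ℂ)) * Complex.exp (r0 * r))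
        = ∫ r in x..(1:ℝ), Complex.exp (k * (x:ℂ)) * Complex.exp ((r0-k) * r) := by
      apply intervalIntegral.integral_congr
      intro r hr
      rw [uIcc_of_le hx2] at hr
      have habs : |x - r| = r - x := by rw [abs_sub_comm]; exact abs_of_nonneg (by linarith [hr.1])
      simp only [habs, ← Complex.exp_add]
      push_cast
      ring_nf
    rw [hcg, intervalIntegral.integral_const_mul, integral_exp_mul_complex hk2']
  rw [h1, h2]
  have e1 : Complex.exp (-k * x) * Complex.exp ((k+r0) * x) = Complex.exp (r0 * x) := by
    rw [← Complex.exp_add]; ring_nf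
  have e2 : Complex.exp (-k * x) * Complex.exp ((k+r0) * (-1:ℝ)) =
      Complex.exp (-r0) * Complex.exp (-k * (1+x)) := by
    rw [← Complex.exp_add, ← Complex.exp_add]; push_cast; ring_nf
  have e3 : Complex.exp (k * x) * Complex.exp ((r0-k) * (1:ℝ)) =
      Complex.exp r0 * Complex.exp (-k * (1-x)) := by
    rw [← Complex.exp_add, ← Complex.exp_add]; push_cast; ring_nf
  have e4 : Complex.exp (k * x) * Complex.exp ((r0-k) * x) = Complex.exp (r0 * x) := by
    rw [← Complex.exp_add]; ring_nf
  have hk2' : r0 - k ≠ 0 := by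
    intro h
    exact hk2 (by rw [← neg_eq_zero, neg_sub]; exact h)
  rw [mul_div_assoc', mul_div_assoc', mul_sub, mul_sub, e1, e2, e3, e4,
    show k^2 - r0^2 = (k+r0)*(k-r0) by ring]
  field_simp
  ring

open Polynomial in
lemma k_ne_zero {N : ℕ} (hN : 1 ≤ N) (τ0 : ℝ) (α : ℂ) (c μ : Fin N → ℂ) (hc : ∀ i, c i ≠ 0)
    (lam : ℂ) (hlam : lam ∉ badSet μ) (hlamα : lam ≠ -α) (ρ : Fin N → ℂ)
    (hρd : ∀ i j, i ≠ j → ρ i ≠ ρ j ∧ ρ i ≠ -ρ j)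
    (hroot : ∀ i, charP c μ τ0 α lam (ρ i) = 0)
    (hkρ : ∀ i j, lam + μ j ≠ ρ i ∧ lam + μ j ≠ -ρ i) :
    ∀ j, lam + μ j ≠ 0 := by
  set A : ℂ := Complex.exp (lam * (τ0 : ℂ)) * (lam + α) / 2 with hA_def
  have hlamα' : lam + α ≠ 0 := fun h => hlamα (by linear_combination h)
  have hA : A ≠ 0 := by
    simp only [hA_def, div_ne_zero_iff]
    exact ⟨mul_ne_zero (Complex.exp_ne_zero _) hlamα', two_ne_zero⟩
  set K : Fin N → ℂ := fun j => (lam + μ j) ^ 2 with hK_def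
  set R : Fin N → ℂ := fun i => (ρ i) ^ 2 with hR_def
  have hRinj : Function.Injective R := by
    intro i j hij
    by_contra hne
    have h2 := hρd i j hne
    have : (ρ i - ρ j) * (ρ i + ρ j) = 0 := by
      simp only [hR_def] at hij
      linear_combination hij
    rcases mul_eq_zero.mp this with h | h
    · exact h2.1 (by linear_combination h)
    · exact h2.2 (by linear_combination h)
  have hKR : ∀ i j, K j - R i ≠ 0 := by
    intro i j h
    have : (lam + μ j - ρ i) * (lam + μ j + ρ i) = 0 := by
      simp only [hK_def, hR_def] at h
      linear_combination h
    rcases mul_eq_zero.mp this with h' | h'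
    · exact (hkρ i j).1 (by linear_combination h')
    · exact (hkρ i j).2 (by linear_combination h')
  classical
  set q1 : ℂ[X] := ∏ j, (X - C (K j)) with hq1
  set q2 : ℂ[X] := ∏ i, (X - C (R i)) with hq2
  set gs : ℂ[X] := ∑ i, C (c i * (lam + μ i)) * ∏ j ∈ Finset.univ.erase i, (X - C (K j)) with hgs
  set g : ℂ[X] := C A * q1 + gs with hg
  set p2 : ℂ[X] := C A * q2 with hp2
  have hq1m : q1.Monic := monic_prod_of_monic _ _ fun j _ => monic_X_sub_C _
  have hq2m : q2.Monic := monic_prod_of_monic _ _ fun j _ => monic_X_sub_C _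
  have hq1d : q1.natDegree = N := by
    rw [hq1, natDegree_prod _ _ fun j _ => X_sub_C_ne_zero _]
    simp
  have hq2d : q2.natDegree = N := by
    rw [hq2, natDegree_prod _ _ fun j _ => X_sub_C_ne_zero _]
    simp
  -- evaluation of g
  have hgeval : ∀ z : ℂ, g.eval z =
      A * ∏ j, (z - K j) + ∑ i, c i * (lam + μ i) * ∏ j ∈ Finset.univ.erase i, (z - K j) := by
    intro z
    simp [hg, hq1, hgs, eval_prod, eval_finset_sum]
  have hgR : ∀ i, g.eval (R i) = 0 := by
    intro i
    rw [hgeval]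
    have := hroot i
    rw [_root_.charP] at this
    simpa [hR_def, hK_def, hA_def] using this
  -- h := g - p2 has degree < N and roots at all R i, hence = 0
  have hh0 : g - p2 = 0 := by
    by_contra hne
    have hdeg : (g - p2).degree < (N : ℕ) := by
      have h1 : (C A * (q1 - q2)).degree < (N : ℕ) := by
        rcases eq_or_ne (q1 - q2) 0 with h0 | h0
        · rw [h0, mul_zero, degree_zero]
          exact_mod_cast WithBot.bot_lt_coe N
        have hsub : (q1 - q2).degree < (N : ℕ) := by
          have hdd : q1.degree = q2.degree := by
            rw [degree_eq_natDegree hq1m.ne_zero, degree_eq_natDegree hq2m.ne_zero, hq1d, hq2d]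
          have hlc : q1.leadingCoeff = q2.leadingCoeff := by
            rw [hq1m.leadingCoeff, hq2m.leadingCoeff]
          have h := degree_sub_lt hdd hq1m.ne_zero hlc
          rwa [degree_eq_natDegree hq1m.ne_zero, hq1d] at h
        calc (C A * (q1 - q2)).degree ≤ (q1 - q2).degree := by
              rw [degree_C_mul hA]
          _ < (N : ℕ) := hsub
      have h2 : gs.degree < (N : ℕ) := by
        refine lt_of_le_of_lt (degree_sum_le _ _) ?_
        rw [Finset.sup_lt_iff (by exact_mod_cast WithBot.bot_lt_coe N)]
        intro i _
        have hpm : (∏ j ∈ Finset.univ.erase i, (X - C (K j)) : ℂ[X]).Monic :=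
          monic_prod_of_monic _ _ fun j _ => monic_X_sub_C _
        have hpd : (∏ j ∈ Finset.univ.erase i, (X - C (K j)) : ℂ[X]).natDegree = N - 1 := by
          rw [natDegree_prod _ _ fun j _ => X_sub_C_ne_zero _]
          simp [Finset.card_erase_of_mem]
        calc (C (c i * (lam + μ i)) * ∏ j ∈ Finset.univ.erase i, (X - C (K j))).degree
            ≤ degree (C (c i * (lam + μ i))) + degree (∏ j ∈ Finset.univ.erase i, (X - C (K j))) :=
              degree_mul_le _ _
          _ ≤ 0 + degree (∏ j ∈ Finset.univ.erase i, (X - C (K j))) := by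
              exact add_le_add_left (degree_C_le) _
          _ = ((N - 1 : ℕ) : WithBot ℕ) := by
              rw [zero_add, degree_eq_natDegree hpm.ne_zero, hpd]
          _ < (N : ℕ) := by
              exact_mod_cast Nat.sub_lt (lt_of_lt_of_le one_pos hN) one_pos
      have hrw : g - p2 = C A * (q1 - q2) + gs := by
        rw [hg, hp2]; ring
      rw [hrw]
      exact lt_of_le_of_lt (degree_add_le _ _) (max_lt h1 h2)
    have := Polynomial.eq_zero_of_natDegree_lt_card_of_eval_eq_zero (g - p2) hRinj
      (fun i => by
        rw [eval_sub, hgR i, zero_sub, neg_eq_zero, hp2, eval_mul]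
        refine mul_eq_zero_of_right _ ?_
        rw [hq2, eval_prod]
        exact Finset.prod_eq_zero (Finset.mem_univ i) (by simp))
      (by rw [Fintype.card_fin]; exact (natDegree_lt_iff_degree_lt hne).mpr hdeg)
    exact hne this
  have hgp2 : g = p2 := by linear_combination hh0
  intro j hj
  -- evaluate at K j
  have hL : g.eval (K j) = c j * (lam + μ j) * ∏ l ∈ Finset.univ.erase j, (K j - K l) := by
    rw [hgeval]
    rw [Finset.prod_eq_zero (Finset.mem_univ j) (by simp), mul_zero, zero_add]
    refine Finset.sum_eq_single j (fun i _ hij => ?_) (by simp)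
    rw [Finset.prod_eq_zero (Finset.mem_erase.mpr ⟨(Ne.symm hij), Finset.mem_univ j⟩) (by simp),
      mul_zero]
  have hRne : p2.eval (K j) ≠ 0 := by
    rw [hp2, eval_mul, eval_C, hq2, eval_prod]
    simp only [eval_sub, eval_X, eval_C]
    exact mul_ne_zero hA (Finset.prod_ne_zero_iff.mpr fun i _ => hKR i j)
  rw [hgp2] at hL
  rw [hL] at hRne
  rw [hj] at hRne
  simp at hRne

lemma coeff_id {N : ℕ} (c μ : Fin N → ℂ) (τ0 : ℝ) (α lam : ℂ) (ρm : ℂ)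
    (hroot : charP c μ τ0 α lam ρm = 0)
    (hne : ∀ j, (lam + μ j) ^ 2 - ρm ^ 2 ≠ 0) :
    lam + α = Complex.exp (-lam * (τ0 : ℂ)) *
      ∑ i, 2 * c i * (lam + μ i) / ((lam + μ i) ^ 2 - ρm ^ 2) := by
  classical
  have hP : (∏ j, (ρm ^ 2 - (lam + μ j) ^ 2)) ≠ 0 :=
    Finset.prod_ne_zero_iff.mpr fun j _ => fun h => hne j (by linear_combination -h)
  have key : (∑ i, 2 * c i * (lam + μ i) / ((lam + μ i) ^ 2 - ρm ^ 2)) *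
      (∏ j, (ρm ^ 2 - (lam + μ j) ^ 2))
      = -2 * ∑ i, c i * (lam + μ i) * ∏ j ∈ Finset.univ.erase i, (ρm ^ 2 - (lam + μ j) ^ 2) := by
    rw [Finset.sum_mul, Finset.mul_sum]
    apply Finset.sum_congr rfl
    intro i _
    rw [← Finset.mul_prod_erase _ _ (Finset.mem_univ i)]
    have hki := hne i
    field_simp
    ring
  have hr2 : ∑ i, c i * (lam + μ i) * ∏ j ∈ Finset.univ.erase i, (ρm ^ 2 - (lam + μ j) ^ 2)
      = -(Complex.exp (lam * (τ0 : ℂ)) * (lam + α) / 2 * ∏ j, (ρm ^ 2 - (lam + μ j) ^ 2)) := by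
    rw [charP] at hroot
    linear_combination hroot
  rw [hr2] at key
  have key2 : (∑ i, 2 * c i * (lam + μ i) / ((lam + μ i) ^ 2 - ρm ^ 2))
      = Complex.exp (lam * (τ0 : ℂ)) * (lam + α) := by
    have key3 : (∑ i, 2 * c i * (lam + μ i) / ((lam + μ i) ^ 2 - ρm ^ 2)) *
        (∏ j, (ρm ^ 2 - (lam + μ j) ^ 2))
        = (Complex.exp (lam * (τ0 : ℂ)) * (lam + α)) * (∏ j, (ρm ^ 2 - (lam + μ j) ^ 2)) := by
      rw [key]; ring
    exact mul_right_cancel₀ hP key3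
  rw [key2, ← mul_assoc, ← Complex.exp_add]
  have : -lam * (τ0 : ℂ) + lam * (τ0 : ℂ) = 0 := by ring
  rw [this, Complex.exp_zero, one_mul]

lemma mulVec_inl {N : ℕ} (μ : Fin N → ℂ) (lam : ℂ) (ρ : Fin N → ℂ) (Γ : Fin N ⊕ Fin N → ℂ)
    (j : Fin N) :
    (Smat μ lam ρ).mulVec Γ (Sum.inl j) =
      ∑ m, (Complex.exp (ρ m) / (lam + μ j - ρ m) * Γ (Sum.inl m)
        + Complex.exp (-ρ m) / (lam + μ j + ρ m) * Γ (Sum.inr m)) := by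
  simp [Smat, Matrix.mulVec, dotProduct, Fintype.sum_sum_type, Finset.sum_add_distrib]

lemma mulVec_inr {N : ℕ} (μ : Fin N → ℂ) (lam : ℂ) (ρ : Fin N → ℂ) (Γ : Fin N ⊕ Fin N → ℂ)
    (j : Fin N) :
    (Smat μ lam ρ).mulVec Γ (Sum.inr j) =
      ∑ m, (Complex.exp (-ρ m) / (lam + μ j + ρ m) * Γ (Sum.inl m)
        + Complex.exp (ρ m) / (lam + μ j - ρ m) * Γ (Sum.inr m)) := by
  simp [Smat, Matrix.mulVec, dotProduct, Fintype.sum_sum_type, Finset.sum_add_distrib]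

lemma delta_formula {N : ℕ} (τ0 : ℝ) (α : ℂ) (c μ : Fin N → ℂ) (lam : ℂ)
    (ρ : Fin N → ℂ)
    (hroot : ∀ i, charP c μ τ0 α lam (ρ i) = 0)
    (hkρ : ∀ i j, lam + μ j ≠ ρ i ∧ lam + μ j ≠ -ρ i)
    (Γ : Fin N ⊕ Fin N → ℂ) {x : ℝ} (hx : x ∈ Icc (-1:ℝ) 1) :
    DeltaOp c μ τ0 α lam (qGamma ρ Γ) x =
      Complex.exp (-lam * (τ0 : ℂ)) * ∑ i, c i * Complex.exp (-(lam + μ i)) *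
        (Complex.exp ((lam + μ i) * (x : ℂ)) * (Smat μ lam ρ).mulVec Γ (Sum.inl i)
         + Complex.exp (-(lam + μ i) * (x : ℂ)) * (Smat μ lam ρ).mulVec Γ (Sum.inr i)) := by
  classical
  set E : ℂ := Complex.exp (-lam * (τ0 : ℂ)) with hE
  set k : Fin N → ℂ := fun i => lam + μ i with hk
  have hsum : ∀ i m, k i + ρ m ≠ 0 ∧ k i - ρ m ≠ 0 := by
    intro i m
    constructor
    · intro h; exact (hkρ m i).2 (by rw [hk] at h; linear_combination h)
    · intro h; exact (hkρ m i).1 (by rw [hk] at h; linear_combination h)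
  -- the integrand as a double sum
  have hpt : ∀ r : ℝ,
      kerJ0 c μ x r * Complex.exp (-lam * (τ0 : ℂ)) * Complex.exp (-lam * ((|x - r| : ℝ) : ℂ))
        * qGamma ρ Γ r
      = ∑ i, ∑ m, (c i * E * Γ (Sum.inl m) *
            (Complex.exp (-k i * ((|x - r| : ℝ) : ℂ)) * Complex.exp (ρ m * r))
          + c i * E * Γ (Sum.inr m) *
            (Complex.exp (-k i * ((|x - r| : ℝ) : ℂ)) * Complex.exp (-ρ m * r))) := by
    intro r
    rw [kerJ0, qGamma]
    simp only [Finset.sum_mul, Finset.mul_sum]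
    rw [Finset.sum_comm]
    apply Finset.sum_congr rfl
    intro i _
    apply Finset.sum_congr rfl
    intro m _
    have hmerge : Complex.exp (-μ i * ((|x - r| : ℝ) : ℂ)) * Complex.exp (-lam * ((|x - r| : ℝ) : ℂ))
        = Complex.exp (-k i * ((|x - r| : ℝ) : ℂ)) := by
      rw [← Complex.exp_add, hk]; ring_nf
    rw [hE, hk]
    rw [← hmerge]
    ring
  -- integrate
  have hInt : (∫ r in (-1:ℝ)..1,
      kerJ0 c μ x r * Complex.exp (-lam * (τ0 : ℂ)) * Complex.exp (-lam * ((|x - r| : ℝ) : ℂ))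
        * qGamma ρ Γ r)
      = ∑ i, ∑ m, (c i * E * Γ (Sum.inl m) *
          (2*(k i)/((k i)^2 - (ρ m)^2) * Complex.exp (ρ m * x)
            - Complex.exp (-ρ m) / (k i + ρ m) * Complex.exp (-(k i) * (1+x))
            - Complex.exp (ρ m) / (k i - ρ m) * Complex.exp (-(k i) * (1-x)))
        + c i * E * Γ (Sum.inr m) *
          (2*(k i)/((k i)^2 - (-ρ m)^2) * Complex.exp (-ρ m * x)
            - Complex.exp (ρ m) / (k i + -ρ m) * Complex.exp (-(k i) * (1+x))
            - Complex.exp (-ρ m) / (k i - -ρ m) * Complex.exp (-(k i) * (1-x)))) := by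
    have hfun : (fun r : ℝ => kerJ0 c μ x r * Complex.exp (-lam * (τ0 : ℂ)) *
        Complex.exp (-lam * ((|x - r| : ℝ) : ℂ)) * qGamma ρ Γ r)
        = fun r : ℝ => ∑ i, ∑ m, (c i * E * Γ (Sum.inl m) *
            (Complex.exp (-k i * ((|x - r| : ℝ) : ℂ)) * Complex.exp (ρ m * r))
          + c i * E * Γ (Sum.inr m) *
            (Complex.exp (-k i * ((|x - r| : ℝ) : ℂ)) * Complex.exp (-ρ m * r))) := funext hpt
    rw [hfun]
    have hIim : ∀ (i m : Fin N), IntervalIntegrable (fun r : ℝ =>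
        c i * E * Γ (Sum.inl m) *
            (Complex.exp (-k i * ((|x - r| : ℝ) : ℂ)) * Complex.exp (ρ m * r))
          + c i * E * Γ (Sum.inr m) *
            (Complex.exp (-k i * ((|x - r| : ℝ) : ℂ)) * Complex.exp (-ρ m * r)))
        MeasureTheory.volume (-1 : ℝ) 1 := by
      intro i m
      apply Continuous.intervalIntegrable
      fun_prop
    have hIi : ∀ (i : Fin N), IntervalIntegrable (fun r : ℝ =>
        ∑ m, (c i * E * Γ (Sum.inl m) *
            (Complex.exp (-k i * ((|x - r| : ℝ) : ℂ)) * Complex.exp (ρ m * r))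
          + c i * E * Γ (Sum.inr m) *
            (Complex.exp (-k i * ((|x - r| : ℝ) : ℂ)) * Complex.exp (-ρ m * r))))
        MeasureTheory.volume (-1 : ℝ) 1 := by
      intro i
      apply Continuous.intervalIntegrable
      fun_prop
    rw [intervalIntegral.integral_finset_sum (fun i _ => hIi i)]
    apply Finset.sum_congr rfl
    intro i _
    rw [intervalIntegral.integral_finset_sum (fun m _ => hIim i m)]
    apply Finset.sum_congr rfl
    intro m _
    rw [intervalIntegral.integral_add ((contInt (k i) (ρ m) x (-1) 1).const_mul _)
      ((contInt (k i) (-ρ m) x (-1) 1).const_mul _),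
      intervalIntegral.integral_const_mul, intervalIntegral.integral_const_mul,
      exp_integral (k i) (ρ m) (hsum i m).1 (hsum i m).2 hx,
      exp_integral (k i) (-ρ m) (by rw [← sub_eq_add_neg]; exact (hsum i m).2)
        (by simpa [sub_neg_eq_add] using (hsum i m).1) hx]
    rw [neg_neg]
  -- the (λ+α) q term
  have hq : (lam + α) * qGamma ρ Γ x
      = ∑ m, ((E * ∑ i, 2 * c i * (k i) / ((k i) ^ 2 - (ρ m) ^ 2)) *
          (Γ (Sum.inl m) * Complex.exp (ρ m * x) + Γ (Sum.inr m) * Complex.exp (-ρ m * x))) := by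
    rw [qGamma, Finset.mul_sum]
    apply Finset.sum_congr rfl
    intro m _
    have hne2 : ∀ j, (lam + μ j) ^ 2 - (ρ m) ^ 2 ≠ 0 := by
      intro j h
      have h1 := (hsum j m).1
      have h2 := (hsum j m).2
      rw [hk] at h1 h2
      rcases mul_eq_zero.mp (show (lam + μ j - ρ m) * (lam + μ j + ρ m) = 0 by
        linear_combination h) with h' | h'
      · exact h2 h'
      · exact h1 h'
    have hco := coeff_id c μ τ0 α lam (ρ m) (hroot m) hne2
    rw [hk, hE]
    rw [← hco]
  rw [DeltaOp, hInt, hq]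
  have hL1 : (∑ m, ((E * ∑ i, 2 * c i * (k i) / ((k i) ^ 2 - (ρ m) ^ 2)) *
      (Γ (Sum.inl m) * Complex.exp (ρ m * x) + Γ (Sum.inr m) * Complex.exp (-ρ m * x))))
      = ∑ i, ∑ m, (E * (2 * c i * (k i) / ((k i) ^ 2 - (ρ m) ^ 2)) *
        (Γ (Sum.inl m) * Complex.exp (ρ m * x) + Γ (Sum.inr m) * Complex.exp (-ρ m * x))) := by
    rw [Finset.sum_comm]
    apply Finset.sum_congr rfl
    intro m _
    rw [Finset.mul_sum, Finset.sum_mul]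
  rw [hL1, ← Finset.sum_sub_distrib, Finset.mul_sum]
  apply Finset.sum_congr rfl
  intro i _
  rw [← Finset.sum_sub_distrib, mulVec_inl, mulVec_inr]
  simp only [mul_add, Finset.mul_sum]
  rw [← Finset.sum_add_distrib]
  apply Finset.sum_congr rfl
  intro m _
  simp only [hk, hE]
  have E1 : Complex.exp (-(lam + μ i) * 1 + -(lam + μ i) * (x:ℂ))
      = Complex.exp (-(lam + μ i)) * Complex.exp (-(lam + μ i) * x) := by
    rw [← Complex.exp_add]; ring_nf
  have E2 : Complex.exp (-(lam + μ i) * (1 - (x:ℂ)))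
      = Complex.exp (-(lam + μ i)) * Complex.exp ((lam + μ i) * x) := by
    rw [← Complex.exp_add]; ring_nf
  rw [E1, E2]
  simp only [neg_sq, sub_neg_eq_add, ← sub_eq_add_neg]
  ring

/-- Let `λ ∉ 𝒮`, `λ ≠ −α`, suppose `𝒫` has `2N` pairwise distinct roots
`±ρ₁,…,±ρ_N` with `kⱼ ≠ ±ρᵢ` for all `i,j`. Then for `Γ ∈ ℂ^{2N}`,
`Δ(λ)q_Γ = 0` on `[−1,1]` if and only if `S(λ)Γ = 0`. -/
theorem stmt13 (N : ℕ) (hN : 1 ≤ N) (τ0 : ℝ) (hτ0 : 0 ≤ τ0) (α : ℂ)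
    (c μ : Fin N → ℂ) (hc : ∀ i, c i ≠ 0) (hμ : Function.Injective μ)
    (lam : ℂ) (hlam : lam ∉ badSet μ) (hlamα : lam ≠ -α)
    (ρ : Fin N → ℂ)
    (hρ0 : ∀ i, ρ i ≠ 0)
    (hρd : ∀ i j, i ≠ j → ρ i ≠ ρ j ∧ ρ i ≠ -ρ j)
    (hroot : ∀ i, charP c μ τ0 α lam (ρ i) = 0)
    (hkρ : ∀ i j, lam + μ j ≠ ρ i ∧ lam + μ j ≠ -ρ i)
    (Γ : Fin N ⊕ Fin N → ℂ) :
    (∀ x ∈ Icc (-1 : ℝ) 1, DeltaOp c μ τ0 α lam (qGamma ρ Γ) x = 0) ↔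
      (Smat μ lam ρ).mulVec Γ = 0 := by
  classical
  have hk0 : ∀ j, lam + μ j ≠ 0 := k_ne_zero hN τ0 α c μ hc lam hlam hlamα ρ hρd hroot hkρ
  have hsq : ∀ i j : Fin N, (lam + μ i) ^ 2 = (lam + μ j) ^ 2 → i = j := by
    intro i j h
    by_contra hne
    exact hlam ⟨i, j, hne, h⟩
  constructor
  · intro hΔ
    set κ : Fin N ⊕ Fin N → ℂ :=
      Sum.elim (fun j => lam + μ j) (fun j => -(lam + μ j)) with hκ
    set a : Fin N ⊕ Fin N → ℂ := fun s => Complex.exp (-lam * (τ0 : ℂ)) *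
      Sum.elim
        (fun j => c j * Complex.exp (-(lam + μ j)) * (Smat μ lam ρ).mulVec Γ (Sum.inl j))
        (fun j => c j * Complex.exp (-(lam + μ j)) * (Smat μ lam ρ).mulVec Γ (Sum.inr j)) s
      with ha
    have hκinj : Function.Injective κ := by
      intro s t h
      rcases s with i | i <;> rcases t with j | j <;>
        simp only [hκ, Sum.elim_inl, Sum.elim_inr] at h
      · rw [hsq i j (by rw [h])]
      · have hij : i = j := hsq i j (by rw [h]; ring)
        subst hij
        exfalso
        apply hk0 i
        linear_combination h / 2
      · have hij : i = j := hsq i j (by rw [← h]; ring)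
        subst hij
        exfalso
        apply hk0 i
        linear_combination -h / 2
      · rw [hsq i j (by rw [neg_inj.mp h])]
    have hz : ∀ x ∈ Icc (-1:ℝ) 1, (∑ s, a s * Complex.exp (κ s * (x : ℂ))) = 0 := by
      intro x hx
      have hd := delta_formula τ0 α c μ lam ρ hroot hkρ Γ hx
      rw [hΔ x hx] at hd
      have hrw : (∑ s, a s * Complex.exp (κ s * (x : ℂ)))
          = Complex.exp (-lam * (τ0 : ℂ)) * ∑ i, c i * Complex.exp (-(lam + μ i)) *
            (Complex.exp ((lam + μ i) * (x : ℂ)) * (Smat μ lam ρ).mulVec Γ (Sum.inl i)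
             + Complex.exp (-(lam + μ i) * (x : ℂ)) * (Smat μ lam ρ).mulVec Γ (Sum.inr i)) := by
        rw [Fintype.sum_sum_type, Finset.mul_sum, ← Finset.sum_add_distrib]
        apply Finset.sum_congr rfl
        intro j _
        simp only [ha, hκ, Sum.elim_inl, Sum.elim_inr]
        ring
      rw [hrw, ← hd]
    have haz := expIndep κ hκinj a hz
    funext s
    have hs := congrFun haz s
    have hE : Complex.exp (-lam * (τ0 : ℂ)) ≠ 0 := Complex.exp_ne_zero _
    rcases s with j | j <;>
      simp only [ha, Sum.elim_inl, Sum.elim_inr, Pi.zero_apply] at hs ⊢ <;>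
      rcases mul_eq_zero.mp hs with h | h <;>
      first
        | exact absurd h hE
        | (rcases mul_eq_zero.mp h with h2 | h2
           · exact absurd h2 (mul_ne_zero (hc j) (Complex.exp_ne_zero _))
           · exact h2)
  · intro hS x hx
    rw [delta_formula τ0 α c μ lam ρ hroot hkρ Γ hx, hS]
    simp
end

section
/- Let λ ∈ ℂ with λ ∉ 𝒮 and λ ≠ −α, suppose the polynomial 𝒫(ρ) := (e^{λτ₀}(λ+α)/2) ∏_{j=1}^{N}(ρ² − k_j(λ)²) + Σ_{i=1}^{N} c_i k_i(λ) ∏_{j≠i}(ρ² − k_j(λ)²) has 2N pairwise distinct roots ±ρ₁,…,±ρ_N, suppose k_j(λ) ≠ ±ρ_i for all i,j, and suppose det S(λ) = 0, where S(λ) = [[S⁻, S⁺],[S⁺, S⁻]] with (S⁻)_{j,i} = e^{ρ_i}/(k_j(λ) − ρ_i) and (S⁺)_{j,i} = e^{−ρ_i}/(k_j(λ) + ρ_i). Then there exists a continuous function q : [−1,1] → ℂ with q ≠ 0 and Δ(λ)q = 0; indeed, for any nonzero Γ = (γ₁,…,γ_N,γ_{−1},…,γ_{−N}) ∈ ℂ^{2N}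 with S(λ)Γ = 0, the function q_λ(x) := Σ_{i=1}^{N} [ γ_i e^{ρ_i x} + γ_{−i} e^{−ρ_i x} ] is nonzero and satisfies Δ(λ)q_λ = 0. -/
open Set

section Aux
open Complex intervalIntegral

lemma key_integral (k ρ : ℂ) (h1 : k + ρ ≠ 0) (h2 : k - ρ ≠ 0) {x : ℝ}
    (hx : x ∈ Icc (-1:ℝ) 1) :
    (∫ r in (-1:ℝ)..1, Complex.exp (-k * ((|x - r| : ℝ) : ℂ)) * Complex.exp (ρ * r)) =
      2*k/((k-ρ)*(k+ρ)) * Complex.exp (ρ * x)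
      - Complex.exp (-k) * Complex.exp (-ρ) * Complex.exp (-k * x) / (k+ρ)
      + Complex.exp (-k) * Complex.exp (ρ) * Complex.exp (k * x) / (ρ-k) := by
  obtain ⟨hx1, hx2⟩ := hx
  have h3 : ρ - k ≠ 0 := fun h => h2 (by rw [sub_eq_zero] at h ⊢; exact h.symm)
  have hcont : Continuous fun r : ℝ => Complex.exp (-k * ((|x - r| : ℝ) : ℂ)) * Complex.exp (ρ * r) := by
    fun_prop
  have hsplit := intervalIntegral.integral_add_adjacent_intervals (a := (-1:ℝ)) (b := x) (c := 1)
    (f := fun r : ℝ => Complex.exp (-k * ((|x - r| : ℝ) : ℂ)) * Complex.exp (ρ * r))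
    (μ := MeasureTheory.volume) (hcont.intervalIntegrable _ _) (hcont.intervalIntegrable _ _)
  rw [← hsplit]
  have e1 : (∫ r in (-1:ℝ)..x, Complex.exp (-k * ((|x - r| : ℝ) : ℂ)) * Complex.exp (ρ * r))
      = Complex.exp (-k * x) * ((Complex.exp ((k+ρ)*x) - Complex.exp ((k+ρ)*(-1))) / (k+ρ)) := by
    rw [show (∫ r in (-1:ℝ)..x, Complex.exp (-k * ((|x - r| : ℝ) : ℂ)) * Complex.exp (ρ * r))
        = ∫ r in (-1:ℝ)..x, Complex.exp (-k * x) * Complex.exp ((k+ρ) * r) from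
      intervalIntegral.integral_congr (fun r hr => by
        rw [uIcc_of_le (by linarith : (-1:ℝ) ≤ x)] at hr
        rw [_root_.abs_of_nonneg (by linarith [hr.2] : (0:ℝ) ≤ x - r),
          ← Complex.exp_add, ← Complex.exp_add]
        congr 1
        push_cast
        ring)]
    rw [intervalIntegral.integral_const_mul, integral_exp_mul_complex h1]
    norm_num
  have e2 : (∫ r in x..(1:ℝ), Complex.exp (-k * ((|x - r| : ℝ) : ℂ)) * Complex.exp (ρ * r))
      = Complex.exp (k * x) * ((Complex.exp (ρ-k) - Complex.exp ((ρ-k)*x)) / (ρ-k)) := by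
    rw [show (∫ r in x..(1:ℝ), Complex.exp (-k * ((|x - r| : ℝ) : ℂ)) * Complex.exp (ρ * r))
        = ∫ r in x..(1:ℝ), Complex.exp (k * x) * Complex.exp ((ρ-k) * r) from
      intervalIntegral.integral_congr (fun r hr => by
        rw [uIcc_of_le (by linarith : x ≤ (1:ℝ))] at hr
        rw [_root_.abs_of_nonpos (by linarith [hr.1] : x - r ≤ (0:ℝ)),
          ← Complex.exp_add, ← Complex.exp_add]
        congr 1
        push_cast
        ring)]
    rw [intervalIntegral.integral_const_mul, integral_exp_mul_complex h3]
    norm_num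
  rw [e1, e2]
  have E : ∀ a b : ℂ, Complex.exp (a + b) = Complex.exp a * Complex.exp b := Complex.exp_add
  rw [show ((k+ρ)*(x:ℂ)) = k*x + ρ*x by ring, show ((ρ-k)*(x:ℂ)) = ρ*x + -(k*x) by ring,
    show (-k*(x:ℂ)) = -(k*x) by ring, show ((k+ρ)*(-1:ℂ)) = -k + -ρ by ring,
    show (ρ - k : ℂ) = ρ + -k by ring, E, E, E, E, Complex.exp_neg (k*x)]
  have hA := Complex.exp_ne_zero (k*(x:ℂ))
  have h3' : (-k + ρ) ≠ 0 := by rw [neg_add_eq_sub]; exact h3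
  rw [show (ρ + -k : ℂ) = -k + ρ by ring]
  field_simp
  ring


lemma hasDerivAt_cexp_mul (b : ℂ) (x : ℝ) :
    HasDerivAt (fun y : ℝ => Complex.exp (b * y)) (b * Complex.exp (b * x)) x := by
  have h1 : HasDerivAt (fun y : ℂ => Complex.exp (b * y)) (Complex.exp (b * x) * b) (x : ℂ) := by
    simpa using ((hasDerivAt_id (x:ℂ)).const_mul b).cexp
  simpa [mul_comm] using h1.comp_ofReal

lemma iteratedDeriv_zero_fun' (n : ℕ) : iteratedDeriv n (fun _ : ℝ => (0:ℂ)) = fun _ => 0 := by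
  induction n with
  | zero => rfl
  | succ n ih => rw [iteratedDeriv_succ, ih]; funext x; simp

lemma iteratedDeriv_expsum {M : ℕ} (b : Fin M → ℂ) (v : Fin M → ℂ) (n : ℕ) :
    iteratedDeriv n (fun x : ℝ => ∑ j, v j * Complex.exp (b j * x))
      = fun x : ℝ => ∑ j, v j * b j ^ n * Complex.exp (b j * x) := by
  induction n with
  | zero => simp
  | succ n ih =>
    rw [iteratedDeriv_succ, ih]
    funext x
    have : HasDerivAt (fun x : ℝ => ∑ j, v j * b j ^ n * Complex.exp (b j * x))
        (∑ j, v j * b j ^ (n+1) * Complex.exp (b j * x)) x := by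
      refine HasDerivAt.fun_sum fun j _ => ?_
      have := (hasDerivAt_cexp_mul (b j) x).const_mul (v j * b j ^ n)
      rw [show v j * b j ^ (n+1) * Complex.exp (b j * x) = v j * b j ^ n * (b j * Complex.exp (b j * x)) by ring]
      exact this
    rw [this.deriv]

lemma expsum_coeffs_zero {M : ℕ} (b : Fin M → ℂ) (hb : Function.Injective b)
    (v : Fin M → ℂ) (hv : ∀ x ∈ Icc (-1:ℝ) 1, ∑ j, v j * Complex.exp (b j * x) = 0) :
    v = 0 := by
  by_contra hne
  have h0 : ∀ n : ℕ, ∑ j, v j * b j ^ n = 0 := by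
    intro n
    have hev : (fun x : ℝ => ∑ j, v j * Complex.exp (b j * x)) =ᶠ[nhds (0:ℝ)] (fun _ => 0) := by
      filter_upwards [Icc_mem_nhds (by norm_num : (-1:ℝ) < 0) (by norm_num : (0:ℝ) < 1)] with x hx
      exact hv x hx
    have h2 := hev.iteratedDeriv_eq n
    rw [iteratedDeriv_expsum, iteratedDeriv_zero_fun'] at h2
    simpa using h2
  have hdet : (Matrix.vandermonde b).transpose.det ≠ 0 := by
    rw [Matrix.det_transpose, Matrix.det_vandermonde]
    refine Finset.prod_ne_zero_iff.mpr fun i _ => Finset.prod_ne_zero_iff.mpr fun j hj => ?_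
    rw [Finset.mem_Ioi] at hj
    exact sub_ne_zero.mpr fun h => (ne_of_gt hj) (hb h)
  have : (Matrix.vandermonde b).transpose.det = 0 := by
    rw [← Matrix.exists_mulVec_eq_zero_iff]
    refine ⟨v, hne, ?_⟩
    funext n
    simp only [Matrix.mulVec, dotProduct, Matrix.transpose_apply, Matrix.vandermonde]
    simpa [mul_comm] using h0 n
  exact hdet this

lemma qGamma_ne {N : ℕ} (ρ : Fin N → ℂ) (hρ0 : ∀ i, ρ i ≠ 0)
    (hρd : ∀ i j, i ≠ j → ρ i ≠ ρ j ∧ ρ i ≠ -ρ j)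
    (Γ : Fin N ⊕ Fin N → ℂ) (hΓ : Γ ≠ 0) :
    ∃ x ∈ Icc (-1:ℝ) 1, qGamma ρ Γ x ≠ 0 := by
  by_contra h
  push_neg at h
  apply hΓ
  set β : Fin N ⊕ Fin N → ℂ := Sum.elim ρ (fun i => -ρ i) with hβdef
  have hββ : (∀ i, β (Sum.inl i) = ρ i) ∧ (∀ i, β (Sum.inr i) = -ρ i) := ⟨fun _ => rfl, fun _ => rfl⟩
  have hβ : Function.Injective β := by
    have key : ∀ i j : Fin N, ρ i ≠ -ρ j := by
      intro i j hij
      by_cases hij' : i = j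
      · subst hij'
        exact hρ0 i (by linear_combination (1/2 : ℂ) * hij - (1/2 : ℂ) * neg_neg (ρ i))
      · exact (hρd i j hij').2 hij
    rintro (i|i) (j|j) hij
    · simp only [Sum.elim_inl, hβdef] at hij
      by_contra hne
      exact (hρd i j (fun hh => hne (by rw [hh]))).1 hij
    · simp only [Sum.elim_inl, Sum.elim_inr, hβdef] at hij
      exact absurd hij (key i j)
    · simp only [Sum.elim_inl, Sum.elim_inr, hβdef] at hij
      exact absurd (by linear_combination -hij) (key j i)
    · simp only [Sum.elim_inr, hβdef] at hij
      by_contra hne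
      exact (hρd i j (fun hh => hne (by rw [hh]))).1 (by linear_combination -hij)
  let e := finSumFinEquiv (m := N) (n := N)
  have hz : (Γ ∘ e.symm) = 0 := by
    apply expsum_coeffs_zero (β ∘ e.symm)
    · exact hβ.comp e.symm.injective
    · intro x hx
      have heq : ∑ j : Fin (N + N), (Γ ∘ e.symm) j * Complex.exp ((β ∘ e.symm) j * x)
          = qGamma ρ Γ x := by
        rw [Fintype.sum_equiv e.symm (fun j => (Γ ∘ e.symm) j * Complex.exp ((β ∘ e.symm) j * (x:ℂ)))
          (fun s => Γ s * Complex.exp (β s * (x:ℂ))) (fun j => rfl)]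
        rw [Fintype.sum_sum_type]
        simp only [hββ.1, hββ.2, qGamma]
        rw [Finset.sum_add_distrib]
      rw [heq]
      exact h x hx
  funext s
  have := congrFun hz (e.symm.symm s)
  simpa using this

/-- closed form for the `(i,m)` pair integral -/
lemma pair_integral (k P T0 cc gl gr : ℂ) (hp : k + P ≠ 0) (hm : k - P ≠ 0) {x : ℝ}
    (hx : x ∈ Icc (-1:ℝ) 1) :
    (∫ r in (-1:ℝ)..1, T0 * cc * (gl * (Complex.exp (-k * ((|x - r| : ℝ) : ℂ)) *
        Complex.exp (P * r)) + gr * (Complex.exp (-k * ((|x - r| : ℝ) : ℂ)) *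
        Complex.exp (-P * r)))) =
      T0 * cc * (gl * (2*k/((k-P)*(k+P)) * Complex.exp (P * x)
          - Complex.exp (-k) * Complex.exp (-P) * Complex.exp (-k * x) / (k+P)
          + Complex.exp (-k) * Complex.exp (P) * Complex.exp (k * x) / (P-k))
        + gr * (2*k/((k - -P)*(k + -P)) * Complex.exp (-P * x)
          - Complex.exp (-k) * Complex.exp (-(-P)) * Complex.exp (-k * x) / (k + -P)
          + Complex.exp (-k) * Complex.exp (-P) * Complex.exp (k * x) / (-P-k))) := by
  have hp' : k + -P ≠ 0 := by rwa [← sub_eq_add_neg]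
  have hm' : k - -P ≠ 0 := by rwa [sub_neg_eq_add]
  have hc1 : Continuous fun r : ℝ => Complex.exp (-k * ((|x - r| : ℝ) : ℂ)) *
      Complex.exp (P * r) := by fun_prop
  have hc2 : Continuous fun r : ℝ => Complex.exp (-k * ((|x - r| : ℝ) : ℂ)) *
      Complex.exp (-P * r) := by fun_prop
  rw [intervalIntegral.integral_const_mul]
  rw [intervalIntegral.integral_add
    ((hc1.intervalIntegrable _ _).const_mul gl) ((hc2.intervalIntegrable _ _).const_mul gr)]
  rw [intervalIntegral.integral_const_mul, intervalIntegral.integral_const_mul]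
  rw [key_integral k P hp hm hx, key_integral k (-P) hp' hm' hx]


lemma key_algebra' (T c A B gl gr eK eP emP X1 X2 Y1 Y2 : ℂ)  :
    (T * c * (A+B) / (A*B)) * (gl * X1 + gr * X2)
      - T * c * (gl * ((A+B)/(A*B) * X1 - eK * emP * Y2 / B - eK * eP * Y1 / A)
        + gr * ((A+B)/(A*B) * X2 - eK * eP * Y2 / A - eK * emP * Y1 / B))
      = (T * c * eK) * (Y2 * (emP / B * gl + eP / A * gr)
          + Y1 * (eP / A * gl + emP / B * gr)) := by
  ring

set_option maxHeartbeats 2000000 in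
lemma delta_vanish {N : ℕ} (τ0 : ℝ) (α : ℂ) (c μ : Fin N → ℂ) (lam : ℂ)
    (ρ : Fin N → ℂ)
    (hroot : ∀ i, charP c μ τ0 α lam (ρ i) = 0)
    (hkρ : ∀ i j, lam + μ j ≠ ρ i ∧ lam + μ j ≠ -ρ i)
    (Γ : Fin N ⊕ Fin N → ℂ) (hΓ : (Smat μ lam ρ).mulVec Γ = 0) :
    ∀ x ∈ Icc (-1:ℝ) 1, DeltaOp c μ τ0 α lam (qGamma ρ Γ) x = 0 := by
  intro x hx
  set T : ℂ := Complex.exp (-lam * (τ0:ℂ)) with hT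
  have hminus : ∀ i m, (lam + μ i) - ρ m ≠ 0 := fun i m =>
    sub_ne_zero.mpr (hkρ m i).1
  have hplus : ∀ i m, (lam + μ i) + ρ m ≠ 0 := fun i m => by
    intro h; exact (hkρ m i).2 (by linear_combination h)
  have hD : ∀ m i, (ρ m)^2 - (lam + μ i)^2 ≠ 0 := by
    intro m i
    rw [show (ρ m)^2 - (lam + μ i)^2 = -(((lam + μ i) - ρ m) * ((lam + μ i) + ρ m)) by ring]
    exact neg_ne_zero.mpr (mul_ne_zero (hminus i m) (hplus i m))
  -- Step A : the root condition in resolved form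
  have hA : ∀ m, (lam + α) = - ∑ i, 2 * T * c i * (lam + μ i) / ((ρ m)^2 - (lam + μ i)^2) := by
    intro m
    have hP : (∏ j, ((ρ m)^2 - (lam + μ j)^2)) ≠ 0 :=
      Finset.prod_ne_zero_iff.mpr fun j _ => hD m j
    have hb : Complex.exp (lam * τ0) * (lam + α) / 2
        + ∑ i, c i * (lam + μ i) / ((ρ m)^2 - (lam + μ i)^2) = 0 := by
      apply mul_right_cancel₀ hP
      rw [zero_mul, ← hroot m, charP, add_mul, Finset.sum_mul]
      congr 1
      refine Finset.sum_congr rfl fun i _ => ?_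
      have he : ((ρ m)^2 - (lam + μ i)^2) * ∏ j ∈ Finset.univ.erase i, ((ρ m)^2 - (lam + μ j)^2)
          = ∏ j, ((ρ m)^2 - (lam + μ j)^2) :=
        Finset.mul_prod_erase Finset.univ (fun j => (ρ m)^2 - (lam + μ j)^2) (Finset.mem_univ i)
      rw [← he, show c i * (lam + μ i) / ((ρ m)^2 - (lam + μ i)^2) *
          (((ρ m)^2 - (lam + μ i)^2) * ∏ j ∈ Finset.univ.erase i, ((ρ m)^2 - (lam + μ j)^2))
          = c i * (lam + μ i) * (∏ j ∈ Finset.univ.erase i, ((ρ m)^2 - (lam + μ j)^2)) *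
            ((((ρ m)^2 - (lam + μ i)^2)) / (((ρ m)^2 - (lam + μ i)^2))) from by ring,
        div_self (hD m i), mul_one]
    have hTT : T * Complex.exp (lam * (τ0:ℂ)) = 1 := by
      rw [hT, ← Complex.exp_add]
      simp
    have hsum : ∑ i, 2 * T * c i * (lam + μ i) / ((ρ m)^2 - (lam + μ i)^2)
        = 2 * T * ∑ i, c i * (lam + μ i) / ((ρ m)^2 - (lam + μ i)^2) := by
      rw [Finset.mul_sum]
      exact Finset.sum_congr rfl fun i _ => by ring
    rw [hsum]
    linear_combination 2 * T * hb - (lam + α) * hTT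
  -- Step B / C : rows of S(λ)Γ = 0
  have hB : ∀ i, ∑ m, (Complex.exp (ρ m) / (lam + μ i - ρ m) * Γ (Sum.inl m)
      + Complex.exp (-ρ m) / (lam + μ i + ρ m) * Γ (Sum.inr m)) = 0 := by
    intro i
    have h := congrFun hΓ (Sum.inl i)
    simp only [Matrix.mulVec, dotProduct, Smat, Fintype.sum_sum_type,
      Matrix.fromBlocks_apply₁₁, Matrix.fromBlocks_apply₁₂, Matrix.of_apply,
      Pi.zero_apply] at h
    rw [Finset.sum_add_distrib]
    exact h
  have hC : ∀ i, ∑ m, (Complex.exp (-ρ m) / (lam + μ i + ρ m) * Γ (Sum.inl m)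
      + Complex.exp (ρ m) / (lam + μ i - ρ m) * Γ (Sum.inr m)) = 0 := by
    intro i
    have h := congrFun hΓ (Sum.inr i)
    simp only [Matrix.mulVec, dotProduct, Smat, Fintype.sum_sum_type,
      Matrix.fromBlocks_apply₂₁, Matrix.fromBlocks_apply₂₂, Matrix.of_apply,
      Pi.zero_apply] at h
    rw [Finset.sum_add_distrib]
    exact h
  -- rewrite the integrand as a double sum
  rw [DeltaOp]
  have hint_eq : ∀ r : ℝ, kerJ0 c μ x r * Complex.exp (-lam * (τ0:ℂ)) *
      Complex.exp (-lam * ((|x - r| : ℝ) : ℂ)) * qGamma ρ Γ r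
      = ∑ i, ∑ m, T * c i * (Γ (Sum.inl m) * (Complex.exp (-(lam + μ i) * ((|x - r| : ℝ) : ℂ)) *
          Complex.exp (ρ m * r)) + Γ (Sum.inr m) * (Complex.exp (-(lam + μ i) * ((|x - r| : ℝ) : ℂ)) *
          Complex.exp (-ρ m * r))) := by
    intro r
    rw [kerJ0, qGamma, Finset.sum_mul, Finset.sum_mul, Finset.sum_mul]
    refine Finset.sum_congr rfl fun i _ => ?_
    rw [Finset.mul_sum]
    refine Finset.sum_congr rfl fun m _ => ?_
    have hk : Complex.exp (-μ i * ((|x - r| : ℝ) : ℂ)) * Complex.exp (-lam * ((|x - r| : ℝ) : ℂ))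
        = Complex.exp (-(lam + μ i) * ((|x - r| : ℝ) : ℂ)) := by
      rw [← Complex.exp_add]; congr 1; ring
    linear_combination (c i * T * (Γ (Sum.inl m) * Complex.exp (ρ m * (r:ℂ))
      + Γ (Sum.inr m) * Complex.exp (-ρ m * (r:ℂ)))) * hk
  rw [intervalIntegral.integral_congr (g := fun r => ∑ i, ∑ m, T * c i *
      (Γ (Sum.inl m) * (Complex.exp (-(lam + μ i) * ((|x - r| : ℝ) : ℂ)) * Complex.exp (ρ m * r))
      + Γ (Sum.inr m) * (Complex.exp (-(lam + μ i) * ((|x - r| : ℝ) : ℂ)) * Complex.exp (-ρ m * r))))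
    (fun r _ => hint_eq r)]
  have hgcont : ∀ (i m : Fin N), Continuous fun r : ℝ => T * c i *
      (Γ (Sum.inl m) * (Complex.exp (-(lam + μ i) * ((|x - r| : ℝ) : ℂ)) * Complex.exp (ρ m * r))
      + Γ (Sum.inr m) * (Complex.exp (-(lam + μ i) * ((|x - r| : ℝ) : ℂ)) * Complex.exp (-ρ m * r))) := by
    intro i m; fun_prop
  rw [intervalIntegral.integral_finset_sum (fun i _ =>
    ((continuous_finset_sum _ fun m _ => hgcont i m).intervalIntegrable _ _))]
  rw [Finset.sum_congr rfl (fun i _ => intervalIntegral.integral_finset_sum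
    (fun m _ => (hgcont i m).intervalIntegrable _ _))]
  rw [Finset.sum_congr rfl (fun i (_ : i ∈ Finset.univ) => Finset.sum_congr rfl
    (fun m _ => pair_integral (lam + μ i) (ρ m) T (c i) (Γ (Sum.inl m)) (Γ (Sum.inr m))
      (hplus i m) (hminus i m) hx))]
  -- now pure algebra
  have hq : (lam + α) * qGamma ρ Γ x
      = ∑ i, ∑ m, -((2 * T * c i * (lam + μ i) / ((ρ m)^2 - (lam + μ i)^2)) *
        (Γ (Sum.inl m) * Complex.exp (ρ m * (x:ℂ)) + Γ (Sum.inr m) * Complex.exp (-ρ m * (x:ℂ)))) := by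
    rw [qGamma, Finset.mul_sum]
    rw [Finset.sum_congr rfl (fun m (_ : m ∈ Finset.univ) => by
      rw [hA m, neg_mul, Finset.sum_mul, ← Finset.sum_neg_distrib])]
    exact Finset.sum_comm
  rw [hq, ← Finset.sum_sub_distrib]
  rw [Finset.sum_congr rfl (fun i (_ : i ∈ Finset.univ) => (Finset.sum_sub_distrib _ _).symm)]
  refine Finset.sum_eq_zero fun i _ => ?_
  have key : ∀ m : Fin N,
      -((2 * T * c i * (lam + μ i) / ((ρ m)^2 - (lam + μ i)^2)) *
        (Γ (Sum.inl m) * Complex.exp (ρ m * (x:ℂ)) + Γ (Sum.inr m) * Complex.exp (-ρ m * (x:ℂ))))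
      - T * c i * (Γ (Sum.inl m) * (2*(lam + μ i)/(((lam + μ i)-ρ m)*((lam + μ i)+ρ m)) * Complex.exp (ρ m * x)
          - Complex.exp (-(lam + μ i)) * Complex.exp (-ρ m) * Complex.exp (-(lam + μ i) * x) / ((lam + μ i)+ρ m)
          + Complex.exp (-(lam + μ i)) * Complex.exp (ρ m) * Complex.exp ((lam + μ i) * x) / (ρ m-(lam + μ i)))
        + Γ (Sum.inr m) * (2*(lam + μ i)/(((lam + μ i) - -ρ m)*((lam + μ i) + -ρ m)) * Complex.exp (-ρ m * x)
          - Complex.exp (-(lam + μ i)) * Complex.exp (-(-ρ m)) * Complex.exp (-(lam + μ i) * x) / ((lam + μ i) + -ρ m)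
          + Complex.exp (-(lam + μ i)) * Complex.exp (-ρ m) * Complex.exp ((lam + μ i) * x) / (-ρ m-(lam + μ i))))
      = (T * c i * Complex.exp (-(lam + μ i))) *
        (Complex.exp (-(lam + μ i) * (x:ℂ)) *
            (Complex.exp (-ρ m) / (lam + μ i + ρ m) * Γ (Sum.inl m)
              + Complex.exp (ρ m) / (lam + μ i - ρ m) * Γ (Sum.inr m))
          + Complex.exp ((lam + μ i) * (x:ℂ)) *
            (Complex.exp (ρ m) / (lam + μ i - ρ m) * Γ (Sum.inl m)
              + Complex.exp (-ρ m) / (lam + μ i + ρ m) * Γ (Sum.inr m))) := by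
    intro m
    simp only [neg_neg]
    rw [show (ρ m)^2 - (lam + μ i)^2 = -(((lam + μ i) - ρ m)*((lam + μ i) + ρ m)) by ring,
      show (lam + μ i) - -ρ m = (lam + μ i) + ρ m by ring,
      show (lam + μ i) + -ρ m = (lam + μ i) - ρ m by ring,
      show -ρ m - (lam + μ i) = -((lam + μ i) + ρ m) by ring,
      show ρ m - (lam + μ i) = -((lam + μ i) - ρ m) by ring]
    simp only [div_neg]
    linear_combination key_algebra' T (c i) ((lam + μ i) - ρ m) ((lam + μ i) + ρ m)
      (Γ (Sum.inl m)) (Γ (Sum.inr m))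
      (Complex.exp (-(lam + μ i))) (Complex.exp (ρ m)) (Complex.exp (-ρ m))
      (Complex.exp (ρ m * (x:ℂ))) (Complex.exp (-ρ m * (x:ℂ)))
      (Complex.exp ((lam + μ i) * (x:ℂ))) (Complex.exp (-(lam + μ i) * (x:ℂ)))
  rw [Finset.sum_congr rfl (fun m (_ : m ∈ Finset.univ) => key m), ← Finset.mul_sum,
    Finset.sum_add_distrib, ← Finset.mul_sum, ← Finset.mul_sum, hB i, hC i]
  simp

end Aux

/-- Under the hypotheses of Statement 13, if moreover `det S(λ) = 0`,
then `Δ(λ)` has a nontrivial continuous null function; indeed for any nonzero `Γ` with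
`S(λ)Γ = 0`, the function `q_Γ` is nonzero on `[−1,1]` and `Δ(λ)q_Γ = 0`. -/


theorem stmt14 (N : ℕ) (hN : 1 ≤ N) (τ0 : ℝ) (hτ0 : 0 ≤ τ0) (α : ℂ)
    (c μ : Fin N → ℂ) (hc : ∀ i, c i ≠ 0) (hμ : Function.Injective μ)
    (lam : ℂ) (hlam : lam ∉ badSet μ) (hlamα : lam ≠ -α)
    (ρ : Fin N → ℂ)
    (hρ0 : ∀ i, ρ i ≠ 0)
    (hρd : ∀ i j, i ≠ j → ρ i ≠ ρ j ∧ ρ i ≠ -ρ j)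
    (hroot : ∀ i, charP c μ τ0 α lam (ρ i) = 0)
    (hkρ : ∀ i j, lam + μ j ≠ ρ i ∧ lam + μ j ≠ -ρ i)
    (hdet : (Smat μ lam ρ).det = 0) :
    (∃ q : ℝ → ℂ, ContinuousOn q (Icc (-1) 1) ∧ (∃ x ∈ Icc (-1 : ℝ) 1, q x ≠ 0) ∧
      ∀ x ∈ Icc (-1 : ℝ) 1, DeltaOp c μ τ0 α lam q x = 0) ∧
    ∀ Γ : Fin N ⊕ Fin N → ℂ, Γ ≠ 0 → (Smat μ lam ρ).mulVec Γ = 0 →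
      (∃ x ∈ Icc (-1 : ℝ) 1, qGamma ρ Γ x ≠ 0) ∧
      ∀ x ∈ Icc (-1 : ℝ) 1, DeltaOp c μ τ0 α lam (qGamma ρ Γ) x = 0 := by
  have hmain : ∀ Γ : Fin N ⊕ Fin N → ℂ, Γ ≠ 0 → (Smat μ lam ρ).mulVec Γ = 0 →
      (∃ x ∈ Icc (-1 : ℝ) 1, qGamma ρ Γ x ≠ 0) ∧
      ∀ x ∈ Icc (-1 : ℝ) 1, DeltaOp c μ τ0 α lam (qGamma ρ Γ) x = 0 :=
    fun Γ hne hm => ⟨qGamma_ne ρ hρ0 hρd Γ hne, delta_vanish τ0 α c μ lam ρ hroot hkρ Γ hm⟩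
  refine ⟨?_, hmain⟩
  obtain ⟨Γ, hne, hm⟩ := (Matrix.exists_mulVec_eq_zero_iff).mpr hdet
  have hcont : Continuous (qGamma ρ Γ) := by
    unfold qGamma
    fun_prop
  exact ⟨qGamma ρ Γ, hcont.continuousOn, (hmain Γ hne hm).1, (hmain Γ hne hm).2⟩
end

section
/- There exist functions ψ, ψ̄ : ℝ → ℝ that agree Lebesgue-almost everywhere with the following property. Set φ(t,r) := ψ(r+t) and φ̄(t,r) := ψ̄(r+t) for t ∈ [−1,0] and r ∈ (0,1), and let τ(x,r) := r. Then for every t ∈ [−1,0] one has φ(t,r) = φ̄(t,r) for Lebesgue-almost every r ∈ (0,1), but for every x ∈ (0,1) one has φ(−τ(x,r),r) ≠ φ̄(−τ(x,r),r) for every r ∈ (0,1); in particular, for no x ∈ (0,1) does φ(−τ(x,·),·) = φ̄(−τ(x,·),·) hold almost everywhere. (This shows that on the state space L²(0,1) the delayed substitution operator entering the neural field equation is not well defined for arbitrary continuous bounded delay functions τ.) -/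
set_option linter.unnecessarySimpa false


open MeasureTheory Set

/-- There exist `ψ, ψ̄ : ℝ → ℝ` agreeing Lebesgue-a.e. such that, with
`φ(t,r) := ψ(r+t)`, `φ̄(t,r) := ψ̄(r+t)` and `τ(x,r) := r`: for every `t ∈ [−1,0]` one has
`φ(t,·) = φ̄(t,·)` a.e. on `(0,1)`, yet for every `x ∈ (0,1)` one has
`φ(−τ(x,r),r) ≠ φ̄(−τ(x,r),r)` for every `r ∈ (0,1)`; in particular for no `x ∈ (0,1)`
does `φ(−τ(x,·),·) = φ̄(−τ(x,·),·)` hold almost everywhere on `(0,1)`. -/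
theorem stmt19 :
    ∃ ψ ψbar : ℝ → ℝ,
      ψ =ᵐ[volume] ψbar ∧
      (∀ t ∈ Icc (-1 : ℝ) 0,
        ∀ᵐ r ∂(volume.restrict (Ioo (0 : ℝ) 1)),
          (fun t r => ψ (r + t)) t r = (fun t r => ψbar (r + t)) t r) ∧
      (∀ x ∈ Ioo (0 : ℝ) 1, ∀ r ∈ Ioo (0 : ℝ) 1,
        (fun t r => ψ (r + t)) (-(fun (_x r' : ℝ) => r') x r) r ≠
          (fun t r => ψbar (r + t)) (-(fun (_x r' : ℝ) => r') x r) r) ∧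
      (∀ x ∈ Ioo (0 : ℝ) 1,
        ¬ ∀ᵐ r ∂(volume.restrict (Ioo (0 : ℝ) 1)),
          (fun t r => ψ (r + t)) (-(fun (_x r' : ℝ) => r') x r) r =
            (fun t r => ψbar (r + t)) (-(fun (_x r' : ℝ) => r') x r) r) := by
  refine ⟨fun _ => 0, Set.indicator {0} (fun _ => 1), ?_, ?_, ?_, ?_⟩
  · have h0 : volume ({0} : Set ℝ) = 0 := measure_singleton 0
    filter_upwards [measure_eq_zero_iff_ae_notMem.mp h0] with y hy
    simp [Set.indicator_of_notMem hy]
  · intro t ht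
    have h0 : volume ({-t} : Set ℝ) = 0 := measure_singleton _
    have : (volume.restrict (Ioo (0:ℝ) 1)) {-t} = 0 :=
      le_antisymm (le_trans (Measure.restrict_le_self _) h0.le) zero_le
    filter_upwards [measure_eq_zero_iff_ae_notMem.mp this] with r hr
    have : r + t ≠ 0 := by
      intro h; apply hr; simp [Set.mem_singleton_iff]; linarith
    simp [Set.indicator_of_notMem, this]
  · intro x hx r hr
    simp
  · intro x hx h
    have h2 : ∀ᵐ r ∂(volume.restrict (Ioo (0:ℝ) 1)), False := by
      filter_upwards [h] with r hr
      simp at hr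
    rw [ae_iff] at h2
    simp only [not_false_eq_true] at h2
    have : (volume.restrict (Ioo (0:ℝ) 1)) univ = 0 := by simpa using h2
    rw [Measure.restrict_apply_univ] at this
    simp [Real.volume_Ioo] at this
end
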